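/- arXiv:1809.07423 — 7 statements merged into one kernel-verified Lean document; each statement's English description precedes it below -/
import Mathlib

section
/- Let R be a principal ideal domain and n ≥ 1. Let α ∈ M_n(R) be a matrix whose determinant factors as det α = a₁a₂ with a₁, a₂ ∈ R satisfying Ra₁ + Ra₂ = R. Then there exist matrices ω₁, ω₂ ∈ M_n(R) such that α = ω₁ω₂, R·(det ω₁) = Ra₁, and R·(det ω₂) = Ra₂. -/
lemma split_assoc_prod {R : Type*} [CommRing R] [IsDomain R] [IsPrincipalIdealRing R] :
    ∀ (k : ℕ) (a₁ a₂ : R) (d : Fin k → R), IsCoprime a₁ a₂ → a₁ * a₂ ≠ 0 →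
      Associated (a₁ * a₂) (∏ i, d i) →
      ∃ b c : Fin k → R, (∀ i, d i = b i * c i) ∧
        Associated a₁ (∏ i, b i) ∧ Associated a₂ (∏ i, c i) := by
  intro k
  induction k with
  | zero =>
    intro a₁ a₂ d hco hne hass
    simp only [Finset.univ_eq_empty, Finset.prod_empty] at hass ⊢
    have hu : IsUnit (a₁ * a₂) := associated_one_iff_isUnit.mp hass
    exact ⟨fun _ => 1, fun _ => 1, finZeroElim,
      associated_one_iff_isUnit.mpr (isUnit_of_mul_isUnit_left hu),
      associated_one_iff_isUnit.mpr (isUnit_of_mul_isUnit_right hu)⟩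
  | succ k ih =>
    intro a₁ a₂ d hco hne hass
    rw [Fin.prod_univ_succ] at hass
    have hd0 : d 0 ∣ a₁ * a₂ := dvd_trans (dvd_mul_right _ _) hass.symm.dvd
    obtain ⟨b₀, c₀, hb₀, hc₀, hbc⟩ := exists_dvd_and_dvd_of_dvd_mul hd0
    obtain ⟨a₁', ha₁⟩ := hb₀
    obtain ⟨a₂', ha₂⟩ := hc₀
    have hb₀ne : b₀ ≠ 0 := fun h => hne (by rw [ha₁, h, zero_mul, zero_mul])
    have hc₀ne : c₀ ≠ 0 := fun h => hne (by rw [ha₂, h, zero_mul, mul_zero])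
    have hass' : Associated (a₁' * a₂') (∏ i : Fin k, d i.succ) := by
      have h1 : Associated ((b₀ * c₀) * (a₁' * a₂')) ((b₀ * c₀) * ∏ i : Fin k, d i.succ) := by
        have e1 : (b₀ * c₀) * (a₁' * a₂') = a₁ * a₂ := by rw [ha₁, ha₂]; ring
        have e2 : d 0 * ∏ i : Fin k, d i.succ = (b₀ * c₀) * ∏ i : Fin k, d i.succ := by rw [hbc]
        rw [e1, ← e2]; exact hass
      exact Associated.of_mul_left h1 (Associated.refl _) (mul_ne_zero hb₀ne hc₀ne)
    have hco' : IsCoprime a₁' a₂' :=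
      (hco.of_isCoprime_of_dvd_left ⟨b₀, by rw [ha₁]; ring⟩).of_isCoprime_of_dvd_right
        ⟨c₀, by rw [ha₂]; ring⟩
    have hne' : a₁' * a₂' ≠ 0 := fun h => by
      apply hne; rw [ha₁, ha₂]; rw [mul_eq_zero] at h
      rcases h with h | h <;> simp [h]
    obtain ⟨b', c', hbc', h1', h2'⟩ := ih a₁' a₂' (fun i => d i.succ) hco' hne' hass'
    refine ⟨Fin.cons b₀ b', Fin.cons c₀ c', ?_, ?_, ?_⟩
    · intro i
      refine Fin.cases ?_ ?_ i
      · simpa using hbc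
      · intro j; simpa using hbc' j
    · rw [Fin.prod_univ_succ]
      simp only [Fin.cons_zero, Fin.cons_succ]
      rw [ha₁]
      exact Associated.mul_left b₀ h1'
    · rw [Fin.prod_univ_succ]
      simp only [Fin.cons_zero, Fin.cons_succ]
      rw [ha₂]
      exact Associated.mul_left c₀ h2'



/-- Let `R` be a principal ideal domain and `n ≥ 1`. Let `α ∈ Mₙ(R)` be a
matrix whose determinant factors as `det α = a₁ * a₂` with `R a₁ + R a₂ = R`. Then there exist
matrices `ω₁, ω₂ ∈ Mₙ(R)` with `α = ω₁ * ω₂`, `R (det ω₁) = R a₁` and `R (det ω₂) = R a₂`. -/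
theorem matrix_factorization_of_coprime_det
    {R : Type*} [CommRing R] [IsDomain R] [IsPrincipalIdealRing R]
    {n : ℕ} (hn : 1 ≤ n) (α : Matrix (Fin n) (Fin n) R) (a₁ a₂ : R)
    (hdet : α.det = a₁ * a₂)
    (hcoprime : Ideal.span {a₁} ⊔ Ideal.span {a₂} = (⊤ : Ideal R)) :
    ∃ ω₁ ω₂ : Matrix (Fin n) (Fin n) R, α = ω₁ * ω₂ ∧
      Ideal.span {ω₁.det} = Ideal.span {a₁} ∧ Ideal.span {ω₂.det} = Ideal.span {a₂} := by
  have hco : IsCoprime a₁ a₂ := by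
    rw [← Ideal.isCoprime_span_singleton_iff, Ideal.isCoprime_iff_sup_eq]
    exact hcoprime
  by_cases h0 : α.det = 0
  · -- degenerate case
    rw [h0] at hdet
    rcases mul_eq_zero.mp hdet.symm with h1 | h2
    · -- a₁ = 0, a₂ is a unit
      subst h1
      have hu : IsUnit a₂ := by
        have := hco.symm
        rwa [isCoprime_zero_right] at this
      obtain ⟨u, hu'⟩ := hu
      refine ⟨α * Matrix.diagonal (fun _ => (↑u⁻¹ : R)), Matrix.diagonal (fun _ => a₂),
        ?_, ?_, ?_⟩
      · rw [Matrix.mul_assoc, Matrix.diagonal_mul_diagonal]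
        simp [← hu', Matrix.diagonal_one]
      · rw [Matrix.det_mul, h0, zero_mul]
      · rw [Matrix.det_diagonal, Finset.prod_const]
        rw [Ideal.span_singleton_eq_top.mpr (hu'.symm ▸ (u.isUnit.pow _)),
          Ideal.span_singleton_eq_top.mpr (hu' ▸ u.isUnit)]
    · -- a₂ = 0, a₁ is a unit
      subst h2
      have hu : IsUnit a₁ := by
        have := hco
        rwa [isCoprime_zero_right] at this
      obtain ⟨u, hu'⟩ := hu
      refine ⟨Matrix.diagonal (fun _ => a₁), Matrix.diagonal (fun _ => (↑u⁻¹ : R)) * α,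
        ?_, ?_, ?_⟩
      · rw [← Matrix.mul_assoc, Matrix.diagonal_mul_diagonal]
        simp [← hu', Matrix.diagonal_one]
      · rw [Matrix.det_diagonal, Finset.prod_const]
        rw [Ideal.span_singleton_eq_top.mpr (hu'.symm ▸ (u.isUnit.pow _)),
          Ideal.span_singleton_eq_top.mpr (hu' ▸ u.isUnit)]
      · rw [Matrix.det_mul, h0, mul_zero]
  · -- nondegenerate case
    classical
    set E := Pi.basisFun R (Fin n) with hE
    set φ : (Fin n → R) →ₗ[R] (Fin n → R) := Matrix.toLin' α with hφ
    have hinj : Function.Injective φ := by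
      intro v w hvw
      have hsub : α.mulVec (v - w) = 0 := by
        have h' : φ (v - w) = 0 := by rw [map_sub, hvw, sub_self]
        rwa [hφ, Matrix.toLin'_apply] at h'
      exact sub_eq_zero.mp (Matrix.eq_zero_of_mulVec_eq_zero h0 hsub)
    set N := LinearMap.range φ with hN
    obtain ⟨m, snf⟩ := N.smithNormalForm E
    set e : (Fin n → R) ≃ₗ[R] N := LinearEquiv.ofInjective φ hinj with he
    have hmn : m = n := by
      have g := (snf.bN.map e.symm).indexEquiv E
      simpa using Fintype.card_congr g
    rw [hmn] at snf
    obtain ⟨bM, bN, f, a, hsnf⟩ := snf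
    have hfbij : Function.Bijective f := Finite.injective_iff_bijective.mp f.injective
    set σ : Equiv.Perm (Fin n) := Equiv.ofBijective f hfbij with hσ
    -- diagonal-type matrices
    have hDmat : ∀ v : Fin n → R,
        (Matrix.of fun i j => if σ j = i then v j else 0) =
          ((σ⁻¹).permMatrix R) * Matrix.diagonal v := by
      intro v
      ext i j
      rw [Matrix.mul_diagonal]
      simp only [Matrix.of_apply, Equiv.Perm.permMatrix, PEquiv.toMatrix_apply,
        Equiv.toPEquiv_apply, Option.mem_def, Option.some.injEq]
      by_cases h : σ j = i
      · rw [if_pos h, if_pos]; · ring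
        · rw [← h]; simp
      · rw [if_neg h, if_neg, zero_mul]
        intro hc
        exact h (by rw [← hc]; simp)
    have hDdet : ∀ v : Fin n → R,
        Associated (Matrix.of fun i j => if σ j = i then v j else 0).det (∏ i, v i) := by
      intro v
      rw [hDmat v, Matrix.det_mul, Matrix.det_permutation, Matrix.det_diagonal]
      exact associated_unit_mul_left _ _
        (((Equiv.Perm.sign σ⁻¹).isUnit).map (Int.castRingHom R))
    -- the matrix factorization α = P * D * C
    set P : Matrix (Fin n) (Fin n) R := LinearMap.toMatrix bM E LinearMap.id with hP
    set C : Matrix (Fin n) (Fin n) R :=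
      LinearMap.toMatrix E bN (e : (Fin n → R) →ₗ[R] N) with hC
    have hPunit : IsUnit P.det := by
      have := (LinearEquiv.refl R (Fin n → R)).isUnit_det bM E
      rw [hP]
      simpa using this
    have hCunit : IsUnit C.det := e.isUnit_det E bN
    have hcompφ : φ = N.subtype ∘ₗ (e : (Fin n → R) →ₗ[R] N) := by
      ext v j
      exact (congrFun (LinearEquiv.ofInjective_apply (f := φ) (h := hinj)
        (Pi.single v 1)) j).symm
    have hDeq : LinearMap.toMatrix bN bM N.subtype =
        Matrix.of fun i j => if σ j = i then a j else 0 := by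
      ext i j
      have hval : (N.subtype (bN j) : Fin n → R) = a j • bM (f j) := hsnf j
      rw [LinearMap.toMatrix_apply, hval, map_smul, Module.Basis.repr_self]
      have hσf : σ j = f j := rfl
      by_cases hij : f j = i
      · simp [Finsupp.single_apply, hij, hσf]
      · simp [Finsupp.single_apply, hij, hσf]
    have hα : α = P * (Matrix.of fun i j => if σ j = i then a j else 0) * C := by
      have h1 : α = LinearMap.toMatrix E E φ := by
        rw [hE, LinearMap.toMatrix_eq_toMatrix', hφ, LinearMap.toMatrix'_toLin']
      rw [h1, hcompφ, LinearMap.toMatrix_comp E bN E]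
      congr 1
      have h2 : (N.subtype : N →ₗ[R] (Fin n → R)) =
          LinearMap.id.comp N.subtype := by rw [LinearMap.id_comp]
      rw [h2, LinearMap.toMatrix_comp bN bM E, ← hP, hDeq]
    -- split the diagonal entries
    have hassoc : Associated (a₁ * a₂) (∏ i, a i) := by
      have h3 : a₁ * a₂ = P.det * (Matrix.of fun i j =>
          if σ j = i then a j else 0).det * C.det := by
        rw [← hdet, hα, Matrix.det_mul, Matrix.det_mul]
      have h5 : P.det * (Matrix.of fun i j =>
          if σ j = i then a j else 0).det * C.det =
          (P.det * C.det) * (Matrix.of fun i j => if σ j = i then a j else 0).det := by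
        ring
      rw [h3, h5]
      exact (associated_unit_mul_left _ _ (hPunit.mul hCunit)).trans (hDdet a)
    obtain ⟨b, c, hbc, h1, h2⟩ :=
      split_assoc_prod n a₁ a₂ a hco (hdet ▸ h0) hassoc
    refine ⟨P * Matrix.of fun i j => if σ j = i then b j else 0,
      Matrix.diagonal c * C, ?_, ?_, ?_⟩
    · rw [hα, Matrix.mul_assoc, Matrix.mul_assoc]
      congr 1
      rw [← Matrix.mul_assoc]
      congr 1
      ext i j
      rw [Matrix.mul_diagonal]
      simp only [Matrix.of_apply]
      split_ifs <;> simp [hbc j]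
    · rw [Ideal.span_singleton_eq_span_singleton, Matrix.det_mul]
      exact ((associated_unit_mul_left _ _ hPunit).trans (hDdet b)).trans h1.symm
    · rw [Ideal.span_singleton_eq_span_singleton, Matrix.det_mul, Matrix.det_diagonal]
      exact (associated_mul_unit_left _ _ hCunit).trans h2.symm
end

section
/- Let R be a principal ideal domain, n ≥ 1, and p ∈ R a prime element. Let α ∈ M_n(R) be such that p² does not divide det α. If α = ω₁ω₂ = ω₁′ω₂′ with ω₁, ω₂, ω₁′, ω₂′ ∈ M_n(R) and R·(det ω₂) = R·(det ω₂′) = Rp, then there exists U ∈ GL_n(R) with ω₂ = U ω₂′; that is, the right factor of determinant p is unique up to left multiplication by units of M_n(R). -/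
/-- Let `R` be a principal ideal domain, `n ≥ 1`, and `p ∈ R` a prime element.
Let `α ∈ Mₙ(R)` be such that `p²` does not divide `det α`. If `α = ω₁ω₂ = ω₁′ω₂′` with all
factors in `Mₙ(R)` and `R (det ω₂) = R (det ω₂′) = R p`, then there is `U ∈ GLₙ(R)` with
`ω₂ = U ω₂′`: the right factor of determinant `p` is unique up to left multiplication by units
of `Mₙ(R)`. -/
theorem matrix_prime_right_factor_unique
    {R : Type*} [CommRing R] [IsDomain R] [IsPrincipalIdealRing R]
    {n : ℕ} (hn : 1 ≤ n) (p : R) (hp : Prime p)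
    (α ω₁ ω₂ ω₁' ω₂' : Matrix (Fin n) (Fin n) R)
    (hα : ¬ p ^ 2 ∣ α.det)
    (h₁ : α = ω₁ * ω₂) (h₂ : α = ω₁' * ω₂')
    (hω₂ : Ideal.span {ω₂.det} = Ideal.span {p})
    (hω₂' : Ideal.span {ω₂'.det} = Ideal.span {p}) :
    ∃ U : Matrix.GeneralLinearGroup (Fin n) R, ω₂ = (U : Matrix (Fin n) (Fin n) R) * ω₂' := by
  classical
  have hp0 : p ≠ 0 := hp.ne_zero
  have hassoc₂ : Associated ω₂.det p := Ideal.span_singleton_eq_span_singleton.mp hω₂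
  have hassoc₂' : Associated ω₂'.det p := Ideal.span_singleton_eq_span_singleton.mp hω₂'
  set d := ω₂'.det with hd
  have hd0 : d ≠ 0 := fun h => hp0 (zero_dvd_iff.mp (h ▸ hassoc₂'.dvd))
  have hpd : p ∣ d := hassoc₂'.symm.dvd
  -- p does not divide det ω₁
  have hω₁ : ¬ p ∣ ω₁.det := by
    intro h
    apply hα
    obtain ⟨c, hc⟩ := h
    obtain ⟨u, hu⟩ := hassoc₂.symm
    have hdet : α.det = ω₁.det * ω₂.det := by rw [h₁, Matrix.det_mul]
    refine ⟨c * u, ?_⟩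
    rw [hdet, hc, ← hu]
    ring
  -- key identity
  have key : ω₁ * (ω₂ * ω₂'.adjugate) = d • ω₁' := by
    calc ω₁ * (ω₂ * ω₂'.adjugate) = (ω₁ * ω₂) * ω₂'.adjugate := by rw [mul_assoc]
      _ = ω₁' * (ω₂' * ω₂'.adjugate) := by rw [← h₁, h₂, mul_assoc]
      _ = ω₁' * (d • 1) := by rw [Matrix.mul_adjugate]
      _ = d • ω₁' := by rw [mul_smul_comm, mul_one]
  -- pass to the residue field R ⧸ (p)
  set I := Ideal.span {p} with hI
  have hImax : I.IsMaximal :=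
    PrincipalIdealRing.isMaximal_of_irreducible hp.irreducible
  letI : Field (R ⧸ I) := Ideal.Quotient.field I
  set φ : Matrix (Fin n) (Fin n) R →+* Matrix (Fin n) (Fin n) (R ⧸ I) :=
    (Ideal.Quotient.mk I).mapMatrix with hφ
  have hmkd : Ideal.Quotient.mk I d = 0 :=
    Ideal.Quotient.eq_zero_iff_mem.mpr (Ideal.mem_span_singleton.mpr hpd)
  have hadj : φ ω₂'.adjugate = (φ ω₂').adjugate :=
    (Ideal.Quotient.mk I).map_adjugate ω₂'
  have hkey : φ ω₁ * (φ ω₂ * (φ ω₂').adjugate) = 0 := by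
    have := congrArg φ key
    rw [map_mul, map_mul, hadj] at this
    rw [this]
    show φ (d • ω₁') = 0
    ext i j
    simp [hφ, hmkd, RingHom.mapMatrix_apply]
  have hunit : IsUnit (φ ω₁) := by
    rw [Matrix.isUnit_iff_isUnit_det]
    have : (φ ω₁).det = Ideal.Quotient.mk I ω₁.det := (RingHom.map_det _ _).symm
    rw [this]
    refine isUnit_iff_ne_zero.mpr ?_
    intro h
    exact hω₁ (Ideal.mem_span_singleton.mp (Ideal.Quotient.eq_zero_iff_mem.mp h))
  have hzero : φ ω₂ * (φ ω₂').adjugate = 0 := by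
    obtain ⟨v, hv⟩ := hunit
    have h2 : (↑(v⁻¹) : Matrix (Fin n) (Fin n) (R ⧸ I)) *
        ((↑v : Matrix (Fin n) (Fin n) (R ⧸ I)) * (φ ω₂ * (φ ω₂').adjugate)) = 0 := by
      rw [hv, hkey, mul_zero]
    rwa [← mul_assoc, Units.inv_mul, one_mul] at h2
  -- divisibility of entries
  have hdiv : ∀ i j, ∃ c, (ω₂ * ω₂'.adjugate) i j = d * c := by
    intro i j
    have hmap : φ (ω₂ * ω₂'.adjugate) = 0 := by
      rw [map_mul, hadj, hzero]
    have : Ideal.Quotient.mk I ((ω₂ * ω₂'.adjugate) i j) = 0 := by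
      have := congrArg (fun M => M i j) hmap
      simpa [hφ, RingHom.mapMatrix_apply] using this
    have hpdvd : p ∣ (ω₂ * ω₂'.adjugate) i j :=
      Ideal.mem_span_singleton.mp (Ideal.Quotient.eq_zero_iff_mem.mp this)
    exact (dvd_trans hassoc₂'.dvd hpdvd)
  choose U hU using fun i => (fun j => (hdiv i (j)))
  set Umat : Matrix (Fin n) (Fin n) R := Matrix.of U with hUmat
  have hsmul : ω₂ * ω₂'.adjugate = d • Umat := by
    ext i j
    simp [hUmat, hU i j, Matrix.smul_apply]
  -- Umat * ω₂' = ω₂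
  have hUω : Umat * ω₂' = ω₂ := by
    have h1 : d • (Umat * ω₂') = d • ω₂ := by
      calc d • (Umat * ω₂') = (d • Umat) * ω₂' := by rw [Matrix.smul_mul]
        _ = (ω₂ * ω₂'.adjugate) * ω₂' := by rw [hsmul]
        _ = ω₂ * (ω₂'.adjugate * ω₂') := by rw [mul_assoc]
        _ = ω₂ * (d • 1) := by rw [Matrix.adjugate_mul]
        _ = d • ω₂ := by rw [mul_smul_comm, mul_one]
    ext i j
    have := congrArg (fun M => M i j) h1
    exact mul_left_cancel₀ hd0 (by simpa [Matrix.smul_apply] using this)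
  -- det Umat is a unit
  obtain ⟨u, hu⟩ := hassoc₂.trans hassoc₂'.symm  -- ω₂.det * u = d
  have hdetU : IsUnit Umat.det := by
    have h1 : (d • Umat).det = d ^ n * Umat.det := by
      rw [Matrix.det_smul]; simp
    have h2 : (ω₂ * ω₂'.adjugate).det = ω₂.det * d ^ (n - 1) := by
      rw [Matrix.det_mul, Matrix.det_adjugate]; simp; exact Or.inl rfl
    have h3 : d ^ n * Umat.det = ω₂.det * d ^ (n - 1) := by
      rw [← h1, ← hsmul, h2]
    have hdn : d ^ n = d ^ (n - 1) * d := by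
      rw [← pow_succ]
      congr 1
      omega
    have h4 : d ^ (n - 1) * (d * Umat.det) = d ^ (n - 1) * ω₂.det := by
      rw [← mul_assoc, ← hdn, h3]; ring
    have h5 : d * Umat.det = ω₂.det :=
      mul_left_cancel₀ (pow_ne_zero _ hd0) h4
    -- d = ω₂.det * u, so ω₂.det * u * Umat.det = ω₂.det
    have hω₂0 : ω₂.det ≠ 0 := by
      intro h
      exact hp0 (zero_dvd_iff.mp (h ▸ hassoc₂.dvd))
    have h6 : ω₂.det * (↑u * Umat.det) = ω₂.det * 1 := by
      calc ω₂.det * (↑u * Umat.det) = (ω₂.det * ↑u) * Umat.det := by ring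
        _ = d * Umat.det := by rw [hu]
        _ = ω₂.det * 1 := by rw [h5, mul_one]
    have h7 : ↑u * Umat.det = 1 := mul_left_cancel₀ hω₂0 h6
    exact IsUnit.of_mul_eq_one _ ((mul_comm _ _).trans h7)
  have : IsUnit Umat := (Matrix.isUnit_iff_isUnit_det Umat).mpr hdetU
  obtain ⟨V, hV⟩ := this
  exact ⟨V, by rw [hV, hUω]⟩
end

section
/- Let R be a principal ideal domain, n ≥ 1, and p ∈ R a prime element. Let π, ω ∈ M_n(R) with R·(det π) = Rp and p not dividing det ω. Then there exist ω′, π′ ∈ M_n(R) with πω = ω′π′ and R·(det π′) = Rp; moreover π′ is unique up to left multiplication by units: if πω = ω″π″ with R·(det π″) = Rp, then π″ = Uπ′ for some U ∈ GL_n(R). -/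
/-- **metacommutation for matrices over a PID.** Let `R` be a principal ideal
domain, `n ≥ 1`, and `p ∈ R` a prime element. Let `π, ω ∈ Mₙ(R)` with `R (det π) = R p` and
`p ∤ det ω`. Then there exist `ω′, π′ ∈ Mₙ(R)` with `π ω = ω′ π′` and `R (det π′) = R p`;
moreover `π′` is unique up to left multiplication by units: if `π ω = ω″ π″` with
`R (det π″) = R p`, then `π″ = U π′` for some `U ∈ GLₙ(R)`. -/
theorem matrix_metacommutation
    {R : Type*} [CommRing R] [IsDomain R] [IsPrincipalIdealRing R]
    {n : ℕ} (hn : 1 ≤ n) (p : R) (hp : Prime p)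
    (π ω : Matrix (Fin n) (Fin n) R)
    (hπ : Ideal.span {π.det} = Ideal.span {p})
    (hω : ¬ p ∣ ω.det) :
    ∃ ω' π' : Matrix (Fin n) (Fin n) R, π * ω = ω' * π' ∧
      Ideal.span {π'.det} = Ideal.span {p} ∧
      ∀ ω'' π'' : Matrix (Fin n) (Fin n) R, π * ω = ω'' * π'' →
        Ideal.span {π''.det} = Ideal.span {p} →
        ∃ U : Matrix.GeneralLinearGroup (Fin n) R,
          π'' = (U : Matrix (Fin n) (Fin n) R) * π' := by
  classical
  have hp0 : p ≠ 0 := hp.ne_zero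
  have hpdvdπ : p ∣ π.det := by
    have h : π.det ∈ Ideal.span {p} := hπ ▸ Ideal.mem_span_singleton_self _
    rwa [Ideal.mem_span_singleton] at h
  -- the quotient field `R/(p)`
  haveI : (Ideal.span {p}).IsMaximal :=
    PrincipalIdealRing.isMaximal_of_irreducible hp.irreducible
  letI : Field (R ⧸ Ideal.span {p}) := Ideal.Quotient.field _
  set f : R →+* R ⧸ Ideal.span {p} := Ideal.Quotient.mk (Ideal.span {p}) with hfdef
  have hf0 : ∀ x : R, f x = 0 ↔ p ∣ x := by
    intro x
    rw [hfdef, Ideal.Quotient.eq_zero_iff_mem, Ideal.mem_span_singleton]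
  set A : Matrix (Fin n) (Fin n) R := π * ω with hAdef
  have hdet0 : (A.map f).det = 0 := by
    have h : f A.det = 0 := by
      rw [hAdef, Matrix.det_mul, map_mul, (hf0 _).2 hpdvdπ, zero_mul]
    rwa [RingHom.map_det, RingHom.mapMatrix_apply] at h
  obtain ⟨v, hv0, hv⟩ := Matrix.exists_mulVec_eq_zero_iff.mpr hdet0
  obtain ⟨i₀, hi₀'⟩ := Function.ne_iff.mp hv0
  have hi₀ : v i₀ ≠ 0 := by simpa using hi₀'
  -- lift of `-(v j / v i₀)`
  have hlift : ∀ j : Fin n, ∃ x : R, f x = -(v j * (v i₀)⁻¹) := fun j =>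
    Ideal.Quotient.mk_surjective _
  choose d hd using hlift
  -- key divisibility, from `A *ᵥ v ≡ 0 mod p`
  have hdvd : ∀ i : Fin n, p ∣ (A i i₀ - ∑ j ∈ Finset.univ.erase i₀, A i j * d j) := by
    intro i
    rw [← hf0]
    have hvi : ∑ j, f (A i j) * v j = 0 := by
      have := congrFun hv i
      simpa [Matrix.mulVec, dotProduct, Matrix.map_apply] using this
    have h1 : (∑ j ∈ Finset.univ.erase i₀, f (A i j) * v j) + f (A i i₀) * v i₀ = 0 := by
      rw [Finset.sum_erase_add _ _ (Finset.mem_univ i₀)]; exact hvi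
    have h2 : ∑ j ∈ Finset.univ.erase i₀, f (A i j) * f (d j)
        = -((∑ j ∈ Finset.univ.erase i₀, f (A i j) * v j) * (v i₀)⁻¹) := by
      rw [Finset.sum_mul, ← Finset.sum_neg_distrib]
      refine Finset.sum_congr rfl fun j _ => ?_
      rw [hd j]; ring
    have hS : (∑ j ∈ Finset.univ.erase i₀, f (A i j) * v j) = -(f (A i i₀) * v i₀) := by
      linear_combination h1
    rw [map_sub, map_sum]
    simp only [map_mul]
    rw [h2, hS]
    field_simp
    ring
  choose c hc using hdvd
  -- the matrices
  set u : Fin n → R := fun k => if k = i₀ then p else d k with hu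
  set π' : Matrix (Fin n) (Fin n) R := (1 : Matrix (Fin n) (Fin n) R).updateCol i₀ u with hπ'
  set ω' : Matrix (Fin n) (Fin n) R := Matrix.of fun i k => if k = i₀ then c i else A i k with hω'
  have hπ'det : π'.det = p := by
    rw [hπ', ← Matrix.cramer_apply, Matrix.cramer_one]
    simp [hu]
  have hπ'app : ∀ k l, π' k l = if l = i₀ then u k else if k = l then 1 else 0 := by
    intro k l
    rw [hπ', Matrix.updateCol_apply]
    split <;> simp [Matrix.one_apply]
  have hfact : A = ω' * π' := by
    ext i l
    rw [Matrix.mul_apply]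
    by_cases hl : l = i₀
    · rw [hl]
      have hπ'col : ∀ k, π' k i₀ = u k := fun k => by rw [hπ'app, if_pos rfl]
      simp only [hπ'col]
      rw [← Finset.sum_erase_add _ _ (Finset.mem_univ i₀)]
      have h1 : ∀ k ∈ Finset.univ.erase i₀, ω' i k * u k = A i k * d k := by
        intro k hk
        have hk' : k ≠ i₀ := Finset.ne_of_mem_erase hk
        simp [hω', hu, hk']
      rw [Finset.sum_congr rfl h1]
      have h2 : ω' i i₀ * u i₀ = c i * p := by simp [hω', hu]
      rw [h2]
      linear_combination hc i
    · have h1 : ∀ k, ω' i k * π' k l = if k = l then ω' i k else 0 := by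
        intro k
        rw [hπ'app, if_neg hl]
        split <;> simp
      rw [Finset.sum_congr rfl (fun k _ => h1 k), Finset.sum_ite_eq' Finset.univ l _]
      simp [hω', hl]
  refine ⟨ω', π', hfact, by rw [hπ'det], ?_⟩
  -- uniqueness
  intro ω'' π'' h'' hspan''
  obtain ⟨u₂, hu₂⟩ := Ideal.span_singleton_eq_span_singleton.mp hspan''
  have hπ''det : π''.det = p * ↑u₂⁻¹ := by
    rw [Units.eq_mul_inv_iff_mul_eq]; exact hu₂
  have heq : ω''.det * π''.det = π.det * ω.det := by
    rw [← Matrix.det_mul, ← Matrix.det_mul, ← h'']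
  have hpω'' : ¬ p ∣ ω''.det := by
    intro hdv
    have hd2 : p * p ∣ π.det * ω.det := by
      rw [← heq]
      exact mul_dvd_mul hdv ⟨↑u₂⁻¹, hπ''det⟩
    obtain ⟨t, ht⟩ := hpdvdπ
    rw [ht, mul_assoc] at hd2
    have : p ∣ t * ω.det := (mul_dvd_mul_iff_left hp0).mp hd2
    rcases hp.dvd_mul.mp this with h | h
    · -- p ∣ t, but π.det = p * t is associated to p, contradiction
      obtain ⟨u₁, hu₁⟩ := Ideal.span_singleton_eq_span_singleton.mp hπ
      obtain ⟨s, hs⟩ := h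
      have h1 : p * 1 = p * (p * (s * ↑u₁)) := by
        linear_combination (-1 : R) * hu₁ + (↑u₁ : R) * ht + (p * ↑u₁) * hs
      have h1' := mul_left_cancel₀ hp0 h1
      exact hp.not_unit (IsUnit.of_mul_eq_one _ h1'.symm)
    · exact hω h
  obtain ⟨a, b, hab⟩ := (hp.coprime_iff_not_dvd.mpr hpω'')
  set M : Matrix (Fin n) (Fin n) R :=
    a • (π'' * π'.adjugate) + b • (ω''.adjugate * ω') with hM
  have hMπ' : M * π' = π'' := by
    rw [hM, Matrix.add_mul, Matrix.smul_mul, Matrix.smul_mul, Matrix.mul_assoc,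
      Matrix.adjugate_mul, hπ'det, Matrix.mul_assoc, ← hfact, h'',
      ← Matrix.mul_assoc, Matrix.adjugate_mul]
    rw [Matrix.smul_mul, Matrix.one_mul, Matrix.mul_smul, Matrix.mul_one]
    rw [smul_smul, smul_smul, ← add_smul, hab, one_smul]
  have hMdet : M.det * p = π''.det := by
    rw [← hπ'det, ← Matrix.det_mul, hMπ']
  have hMunit : IsUnit M.det := by
    have : M.det * p = ↑u₂⁻¹ * p := by rw [hMdet, hπ''det]; ring
    have h2 := mul_right_cancel₀ hp0 this
    rw [h2]; exact Units.isUnit _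
  haveI := M.invertibleOfIsUnitDet hMunit
  exact ⟨⟨M, ⅟M, mul_invOf_self M, invOf_mul_self M⟩, hMπ'.symm⟩
end

section
/- Let R be a commutative ring, 𝔭 ⊆ R a maximal ideal, and O an R-algebra. Let ω ∈ O be such that there exist b ∈ R ∖ 𝔭 and β ∈ O with ωβ = βω = b·1_O. Then the map sending a left ideal P of O to the left ideal of O generated by {xω : x ∈ P} together with 𝔭O is a bijection from the set of left ideals of O containing 𝔭O to itself. -/
/-- Let `R` be a commutative ring, `𝔭 ⊆ R` a maximal ideal, and `O` an
`R`-algebra. Let `ω ∈ O` be such that there exist `b ∈ R ∖ 𝔭` and `β ∈ O` with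
`ω β = β ω = b • 1`. Then the map sending a left ideal `P` of `O` to the left ideal of `O`
generated by `{x ω : x ∈ P}` together with `𝔭 O` is a bijection from the set of left ideals
of `O` containing `𝔭 O` to itself. -/
theorem sigma_bijOn_ideals_containing_pO
    {R O : Type*} [CommRing R] [Ring O] [Algebra R O]
    (𝔭 : Ideal R) (h𝔭 : 𝔭.IsMaximal) (ω : O)
    (hω : ∃ b : R, b ∉ 𝔭 ∧ ∃ β : O,
      ω * β = algebraMap R O b ∧ β * ω = algebraMap R O b) :
    Set.BijOn
      (fun P : Ideal O =>
        (Submodule.span O ((fun x => x * ω) '' (P : Set O) ∪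
          ((Ideal.map (algebraMap R O) 𝔭 : Ideal O) : Set O)) : Ideal O))
      {P : Ideal O | Ideal.map (algebraMap R O) 𝔭 ≤ P}
      {P : Ideal O | Ideal.map (algebraMap R O) 𝔭 ≤ P} := by
  classical
  obtain ⟨b, hb, β, hωβ, hβω⟩ := hω
  obtain ⟨c, i, hi, hci⟩ := h𝔭.exists_inv hb
  set A : Ideal O := Ideal.map (algebraMap R O) 𝔭 with hA
  have hAspan : A = Ideal.span ((algebraMap R O) '' 𝔭) := rfl
  -- A is closed under right multiplication
  have hAmul : ∀ a ∈ A, ∀ x : O, a * x ∈ A := by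
    intro a ha x
    rw [hAspan] at ha
    induction ha using Submodule.span_induction with
    | mem y hy =>
      obtain ⟨r, hr, rfl⟩ := hy
      rw [Algebra.commutes r x]
      exact Ideal.mul_mem_left _ _ (Ideal.mem_map_of_mem _ hr)
    | zero => simp
    | add y z _ _ hy hz => rw [add_mul]; exact add_mem hy hz
    | smul o y _ hy => rw [smul_eq_mul, mul_assoc]; exact Ideal.mul_mem_left _ _ hy
  have hsmulA : ∀ (r : R), r ∈ 𝔭 → ∀ x : O, r • x ∈ A := by
    intro r hr x
    rw [Algebra.smul_def]
    exact hAmul _ (Ideal.mem_map_of_mem _ hr) x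
  have he : c * b - 1 ∈ 𝔭 := by
    have : c * b - 1 = -i := by linear_combination hci
    rw [this]; exact neg_mem hi
  -- the key cancellation lemma
  have key : ∀ (u v : O), u * v = algebraMap R O (c * b) →
      ∀ P : Ideal O, A ≤ P →
      Submodule.span O ((fun x => x * v) ''
        ((Submodule.span O ((fun x => x * u) '' (P : Set O) ∪ (A : Set O)) : Ideal O) : Set O)
        ∪ (A : Set O)) = P := by
    intro u v huv P hP
    apply le_antisymm
    · rw [Submodule.span_le]
      rintro z (⟨y, hy, rfl⟩ | hz)
      · -- show y * v ∈ P for y in span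
        refine SetLike.mem_coe.mpr ?_
        induction hy using Submodule.span_induction with
        | mem w hw =>
          rcases hw with ⟨x, hx, rfl⟩ | hw
          · show x * u * v ∈ P
            have : x * u * v = x + (c * b - 1) • x := by
              rw [mul_assoc, huv, ← Algebra.commutes, ← Algebra.smul_def, sub_smul, one_smul]
              abel
            rw [this]
            exact add_mem hx (hP (hsmulA _ he x))
          · exact hP (hAmul _ hw v)
        | zero => simp
        | add y z _ _ hy hz =>
            show (y + z) * v ∈ P
            rw [add_mul]; exact add_mem hy hz
        | smul o y _ hy =>
            show (o • y) * v ∈ P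
            rw [smul_eq_mul, mul_assoc]; exact Ideal.mul_mem_left _ _ hy
      · exact hP hz
    · intro x hx
      have h1 : x * u * v ∈ Submodule.span O ((fun x => x * v) ''
          ((Submodule.span O ((fun x => x * u) '' (P : Set O) ∪ (A : Set O)) : Ideal O) : Set O)
          ∪ (A : Set O)) := by
        apply Submodule.subset_span
        exact Or.inl ⟨x * u, Submodule.subset_span (Or.inl ⟨x, hx, rfl⟩), rfl⟩
      have h2 : (c * b - 1) • x ∈ Submodule.span O ((fun x => x * v) ''
          ((Submodule.span O ((fun x => x * u) '' (P : Set O) ∪ (A : Set O)) : Ideal O) : Set O)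
          ∪ (A : Set O)) := Submodule.subset_span (Or.inr (hsmulA _ he x))
      have hxx : x = x * u * v - (c * b - 1) • x := by
        rw [mul_assoc, huv, ← Algebra.commutes, ← Algebra.smul_def, sub_smul, one_smul]
        abel
      rw [hxx]
      exact sub_mem h1 h2
  -- the inverse map
  set β' : O := c • β with hβ'
  have hωβ' : ω * β' = algebraMap R O (c * b) := by
    rw [hβ', mul_smul_comm, hωβ, Algebra.smul_def, ← map_mul]
  have hβ'ω : β' * ω = algebraMap R O (c * b) := by
    rw [hβ', smul_mul_assoc, hβω, Algebra.smul_def, ← map_mul]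
  refine Set.InvOn.bijOn (f' := fun P : Ideal O =>
      (Submodule.span O ((fun x => x * β') '' (P : Set O) ∪ (A : Set O)) : Ideal O))
    ⟨?_, ?_⟩ ?_ ?_
  · intro P hP
    exact key ω β' hωβ' P hP
  · intro P hP
    exact key β' ω hβ'ω P hP
  · intro P _
    exact fun x hx => Submodule.subset_span (Or.inr hx)
  · intro P _
    exact fun x hx => Submodule.subset_span (Or.inr hx)
end

section
/- Let 𝔽_q be a finite field with q elements and let φ ∈ 𝔽_q[X] be monic irreducible with φ ≠ X. Then subexp(φ) = exp(φ)/gcd(q − 1, exp(φ)). -/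
/-- For a polynomial `ψ` over a field, `polyExp ψ` is the least positive integer `e` such that
`ψ ∣ X^e − 1` (and `0` if none exists). -/
noncomputable def polyExp {F : Type*} [Field F] (ψ : Polynomial F) : ℕ :=
  sInf {e : ℕ | 0 < e ∧ ψ ∣ Polynomial.X ^ e - 1}

/-- For a polynomial `ψ` over a field, `polySubexp ψ` is the least positive integer `e` such
that `ψ ∣ X^e − α` for some nonzero scalar `α` (and `0` if none exists). -/
noncomputable def polySubexp {F : Type*} [Field F] (ψ : Polynomial F) : ℕ :=
  sInf {e : ℕ | 0 < e ∧ ∃ α : F, α ≠ 0 ∧ ψ ∣ Polynomial.X ^ e - Polynomial.C α}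

open Polynomial

/-- If `y ^ (q - 1) = 1` in an `F`-algebra field `K`, then `y` is in the image of `Fˣ`. -/
lemma exists_of_pow_card_sub_one_eq_one' {F K : Type*} [Field F] [Fintype F] [Field K]
    [Algebra F K] (y : K) (hy : y ^ (Fintype.card F - 1) = 1) :
    ∃ α : F, α ≠ 0 ∧ algebraMap F K α = y := by
  classical
  set q := Fintype.card F with hq
  have hq2 : 1 < q := Fintype.one_lt_card
  have hqpos : 0 < q - 1 := by omega
  set ψ : K[X] := X ^ (q - 1) - C 1 with hψ
  have hψne : ψ ≠ 0 := X_pow_sub_C_ne_zero hqpos 1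
  set T := ψ.roots.toFinset with hT
  set A := (Finset.univ.erase (0 : F)).image (algebraMap F K) with hA
  have hsub : A ⊆ T := by
    intro z hz
    simp only [hA, Finset.mem_image] at hz
    obtain ⟨α, hα, rfl⟩ := hz
    have hα0 : α ≠ 0 := Finset.ne_of_mem_erase hα
    rw [hT, Multiset.mem_toFinset, mem_roots hψne]
    simp [hψ, IsRoot, ← map_pow, FiniteField.pow_card_sub_one_eq_one α hα0]
    have h1 : α ^ (q - 1) = 1 := FiniteField.pow_card_sub_one_eq_one α hα0
    rw [h1, map_one, sub_self]
  have hcardA : A.card = q - 1 := by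
    rw [hA, Finset.card_image_of_injective _ (algebraMap F K).injective,
      Finset.card_erase_of_mem (Finset.mem_univ 0), Finset.card_univ]
  have hcardT : T.card ≤ q - 1 := by
    calc T.card ≤ Multiset.card ψ.roots := ψ.roots.toFinset_card_le
      _ ≤ ψ.natDegree := ψ.card_roots'
      _ = q - 1 := by rw [hψ, natDegree_X_pow_sub_C]
  have hAT : A = T := Finset.eq_of_subset_of_card_le hsub (by omega)
  have hyT : y ∈ T := by
    rw [hT, Multiset.mem_toFinset, mem_roots hψne]
    simp [hψ, IsRoot, hy]
  rw [← hAT] at hyT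
  simp only [hA, Finset.mem_image] at hyT
  obtain ⟨α, hα, h⟩ := hyT
  exact ⟨α, Finset.ne_of_mem_erase hα, h⟩

/-- Let `𝔽_q` be a finite field with `q` elements and let `φ ∈ 𝔽_q[X]` be
monic irreducible with `φ ≠ X`. Then `subexp(φ) = exp(φ)/gcd(q − 1, exp(φ))`. -/
theorem polySubexp_eq_polyExp_div_gcd
    {F : Type*} [Field F] [Fintype F]
    (φ : Polynomial F) (hmonic : φ.Monic) (hirr : Irreducible φ)
    (hX : φ ≠ Polynomial.X) :
    polySubexp φ = polyExp φ / Nat.gcd (Fintype.card F - 1) (polyExp φ) := by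
  haveI hfact : Fact (Irreducible φ) := ⟨hirr⟩
  have hφ0 : φ ≠ 0 := hirr.ne_zero
  haveI : Module.Finite F (AdjoinRoot φ) := (AdjoinRoot.powerBasis hφ0).finite
  haveI : Finite (AdjoinRoot φ) := Module.finite_of_finite F
  set q := Fintype.card F with hq
  have hq2 : 1 < q := Fintype.one_lt_card
  set x : AdjoinRoot φ := AdjoinRoot.root φ with hxdef
  have hx0 : x ≠ 0 := by
    intro h
    have hdvd : φ ∣ X := by
      rw [← AdjoinRoot.mk_eq_zero, AdjoinRoot.mk_X, ← hxdef, h]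
    exact hX (Polynomial.eq_of_monic_of_associated hmonic monic_X
      (hirr.associated_of_dvd irreducible_X hdvd))
  have hnpos : 0 < orderOf x := by
    have hu : IsUnit x := hx0.isUnit
    rw [← hu.unit_spec, orderOf_units]
    exact orderOf_pos hu.unit
  set n := orderOf x with hn
  set g := Nat.gcd (q - 1) n with hg
  have hgpos : 0 < g := Nat.gcd_pos_of_pos_right _ hnpos
  set m := n / g with hm
  have hmg : m * g = n := Nat.div_mul_cancel (Nat.gcd_dvd_right _ _)
  have hmpos : 0 < m := Nat.div_pos (Nat.le_of_dvd hnpos (Nat.gcd_dvd_right _ _)) hgpos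
  -- characterization of divisibility via the root
  have hdvd_iff : ∀ (e : ℕ) (α : F), (φ ∣ X ^ e - C α) ↔ x ^ e = algebraMap F _ α := by
    intro e α
    rw [← AdjoinRoot.mk_eq_zero, map_sub, map_pow, AdjoinRoot.mk_X, AdjoinRoot.mk_C,
      sub_eq_zero, AdjoinRoot.algebraMap_eq]
  have hdvd_iff1 : ∀ e : ℕ, (φ ∣ X ^ e - 1) ↔ x ^ e = 1 := by
    intro e
    have : (1 : Polynomial F) = C 1 := by simp
    rw [this, hdvd_iff e 1, map_one]
  -- polyExp φ = n
  have hexp : polyExp φ = n := by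
    have hset : {e : ℕ | 0 < e ∧ φ ∣ X ^ e - 1} = {e : ℕ | 0 < e ∧ x ^ e = 1} := by
      ext e; simp [hdvd_iff1]
    rw [polyExp, hset]
    have hmem : n ∈ {e : ℕ | 0 < e ∧ x ^ e = 1} := ⟨hnpos, pow_orderOf_eq_one x⟩
    refine le_antisymm (Nat.sInf_le hmem) ?_
    have hh := Nat.sInf_mem (⟨n, hmem⟩ : Set.Nonempty _)
    exact orderOf_le_of_pow_eq_one hh.1 hh.2
  -- the set defining polySubexp
  set S : Set ℕ := {e : ℕ | 0 < e ∧ ∃ α : F, α ≠ 0 ∧ φ ∣ X ^ e - C α} with hS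
  have hmmem : m ∈ S := by
    have hkey : (x ^ m) ^ (q - 1) = 1 := by
      rw [← pow_mul]
      apply orderOf_dvd_iff_pow_eq_one.mp
      refine ⟨(q - 1) / g, ?_⟩
      show m * (q - 1) = n * ((q - 1) / g)
      rw [← hmg, Nat.mul_assoc, Nat.mul_div_cancel' (Nat.gcd_dvd_left (q - 1) n)]
    obtain ⟨α, hα, hαeq⟩ := exists_of_pow_card_sub_one_eq_one' (x ^ m) hkey
    exact ⟨hmpos, α, hα, (hdvd_iff m α).mpr hαeq.symm⟩
  have hlb : ∀ e ∈ S, m ∣ e := by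
    rintro e ⟨hepos, α, hα, hαdvd⟩
    have hxe : x ^ e = algebraMap F _ α := (hdvd_iff e α).mp hαdvd
    have hpow : x ^ (e * (q - 1)) = 1 := by
      rw [pow_mul, hxe, ← map_pow, FiniteField.pow_card_sub_one_eq_one α hα, map_one]
    have hdvd : n ∣ e * (q - 1) := orderOf_dvd_of_pow_eq_one hpow
    -- n = m * g, q - 1 = ((q-1)/g) * g
    have hq1 : (q - 1) = ((q - 1) / g) * g := (Nat.div_mul_cancel (Nat.gcd_dvd_left _ _)).symm
    have hdvd2 : m * g ∣ (e * ((q - 1) / g)) * g := by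
      have he : (e * ((q - 1) / g)) * g = e * (q - 1) := by
        rw [Nat.mul_assoc, Nat.div_mul_cancel (Nat.gcd_dvd_left (q - 1) n)]
      rw [hmg, he]; exact hdvd
    have hdvd3 : m ∣ e * ((q - 1) / g) := (Nat.mul_dvd_mul_iff_right hgpos).mp hdvd2
    have hcop : Nat.Coprime ((q - 1) / g) m := Nat.coprime_div_gcd_div_gcd hgpos
    exact (Nat.Coprime.dvd_of_dvd_mul_right hcop.symm) hdvd3
  have hsub : polySubexp φ = m := by
    rw [polySubexp, ← hS]
    refine le_antisymm (Nat.sInf_le hmmem) ?_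
    have hh := Nat.sInf_mem (⟨m, hmmem⟩ : Set.Nonempty S)
    exact Nat.le_of_dvd hh.1 (hlb _ hh)
  rw [hsub, hexp]
end

section
/- Let 𝔽_q be a finite field with q elements and characteristic p, let φ ∈ 𝔽_q[X] be monic irreducible with φ ≠ X, and let j ≥ 1. Then subexp(φ^j) = subexp(φ)·p^t, where t = min{r ∈ ℤ_{≥0} : p^r ≥ j}. -/
open Polynomial

/-- Divisibility of `X^n - C γ` by `φ` in terms of the adjoined root. -/
private lemma adjoinRoot_dvd_iff {F : Type*} [Field F] (φ : F[X]) (n : ℕ) (γ : F) :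
    φ ∣ X ^ n - C γ ↔ (AdjoinRoot.root φ) ^ n = AdjoinRoot.of φ γ := by
  rw [← AdjoinRoot.mk_eq_zero, map_sub, map_pow, AdjoinRoot.mk_X, sub_eq_zero]
  have h : AdjoinRoot.mk φ (C γ) = AdjoinRoot.of φ γ := rfl
  rw [h]

/-- The defining set of `polySubexp ψ` is nonempty when `X` is coprime to `ψ ≠ 0`
over a finite field. -/
private lemma polySubexp_set_nonempty {F : Type*} [Field F] [Fintype F]
    (ψ : F[X]) (hψ : ψ ≠ 0) (hco : IsCoprime X ψ) :
    ∃ e : ℕ, 0 < e ∧ ∃ α : F, α ≠ 0 ∧ ψ ∣ X ^ e - C α := by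
  have h1 : Module.Finite F (AdjoinRoot ψ) :=
    Module.Finite.of_basis (AdjoinRoot.powerBasis hψ).basis
  have h2 : Finite (AdjoinRoot ψ) := Module.finite_of_finite F
  obtain ⟨a, b, hab⟩ := hco
  have hunit : IsUnit (AdjoinRoot.mk ψ X) := by
    apply IsUnit.of_mul_eq_one (AdjoinRoot.mk ψ a)
    have h := congrArg (AdjoinRoot.mk ψ) hab
    simpa [map_add, map_mul, AdjoinRoot.mk_self, mul_comm] using h
  obtain ⟨u, hu⟩ := hunit
  refine ⟨orderOf u, orderOf_pos u, 1, one_ne_zero, ?_⟩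
  rw [← AdjoinRoot.mk_eq_zero]
  have hpow : (AdjoinRoot.root ψ) ^ orderOf u = 1 := by
    rw [← AdjoinRoot.mk_X, ← hu, ← Units.val_pow_eq_pow_val, pow_orderOf_eq_one,
      Units.val_one]
  simp [map_sub, map_pow, AdjoinRoot.mk_X, hpow]

/-- If `φ ∣ X^e - C β` with `e > 0`, `β ≠ 0`, then `polySubexp φ ∣ e`. -/
private lemma polySubexp_dvd {F : Type*} [Field F] [Fintype F]
    (φ : F[X]) (hirr : Irreducible φ) (hXd : ¬ φ ∣ X)
    {e : ℕ} (he : 0 < e) {β : F} (hβ : β ≠ 0) (hdvd : φ ∣ X ^ e - C β) :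
    polySubexp φ ∣ e := by
  classical
  haveI := Fact.mk hirr
  set S : Set ℕ := {n : ℕ | 0 < n ∧ ∃ α : F, α ≠ 0 ∧ φ ∣ X ^ n - C α} with hS
  have hmem : e ∈ S := ⟨he, β, hβ, hdvd⟩
  have hsmem : polySubexp φ ∈ S := Nat.sInf_mem ⟨e, hmem⟩
  obtain ⟨hspos, α, hα, hsdvd⟩ := hsmem
  set s := polySubexp φ with hs
  set x := AdjoinRoot.root φ with hxdef
  have hxs : x ^ s = AdjoinRoot.of φ α := (adjoinRoot_dvd_iff φ s α).mp hsdvd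
  have hxe : x ^ e = AdjoinRoot.of φ β := (adjoinRoot_dvd_iff φ e β).mp hdvd
  rcases Nat.eq_zero_or_pos (e % s) with h0 | hrpos
  · exact Nat.dvd_of_mod_eq_zero h0
  · exfalso
    have hαq : (α ^ (e / s)) ≠ 0 := pow_ne_zero _ hα
    have hof : Function.Injective (AdjoinRoot.of φ) := (AdjoinRoot.of φ).injective
    have hofne : AdjoinRoot.of φ (α ^ (e / s)) ≠ 0 := by
      intro h
      exact hαq (hof (by rw [h, map_zero]))
    have hdecomp : x ^ e = AdjoinRoot.of φ (α ^ (e / s)) * x ^ (e % s) := by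
      conv_lhs => rw [← Nat.div_add_mod e s]
      rw [pow_add, pow_mul, hxs, map_pow]
    have hαne : AdjoinRoot.of φ α ≠ 0 := fun h => hα (hof (by rw [h, map_zero]))
    have hxr : x ^ (e % s) = AdjoinRoot.of φ (β / α ^ (e / s)) := by
      rw [map_div₀, map_pow, eq_div_iff (pow_ne_zero _ hαne)]
      rw [hxe] at hdecomp
      rw [hdecomp, map_pow, mul_comm]
    have hγ : β / α ^ (e / s) ≠ 0 := div_ne_zero hβ hαq
    have hmem' : e % s ∈ S :=
      ⟨hrpos, _, hγ, (adjoinRoot_dvd_iff φ (e % s) _).mpr hxr⟩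
    have hkey : s ≤ e % s := Nat.sInf_le hmem'
    exact absurd hkey (not_le.mpr (Nat.mod_lt e hspos))

/-- Let `𝔽_q` be a finite field with `q` elements and characteristic `p`,
let `φ ∈ 𝔽_q[X]` be monic irreducible with `φ ≠ X`, and let `j ≥ 1`. Then
`subexp(φ^j) = subexp(φ) · p^t`, where `t = min {r ∈ ℤ_{≥0} : p^r ≥ j}`. -/
theorem polySubexp_pow
    {F : Type*} [Field F] [Fintype F] (p : ℕ) [Fact p.Prime] [CharP F p]
    (φ : Polynomial F) (hmonic : φ.Monic) (hirr : Irreducible φ)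
    (hX : φ ≠ Polynomial.X) (j : ℕ) (hj : 1 ≤ j) :
    polySubexp (φ ^ j) = polySubexp φ * p ^ sInf {r : ℕ | j ≤ p ^ r} := by
  classical
  haveI := Fact.mk hirr
  haveI : CharP (Polynomial F) p := charP_of_injective_ringHom (Polynomial.C_injective) p
  have hp : p.Prime := Fact.out
  have hφ0 : φ ≠ 0 := hirr.ne_zero
  have hprime : Prime φ := hirr.prime
  -- φ does not divide X
  have hXd : ¬ φ ∣ X := fun h =>
    hX (Polynomial.eq_of_monic_of_associated hmonic monic_X
      (hirr.associated_of_dvd irreducible_X h))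
  -- X is coprime to φ, hence to φ ^ j
  have hco : IsCoprime X φ := (hirr.coprime_iff_not_dvd.mpr hXd).symm
  have hcoj : IsCoprime X (φ ^ j) := hco.pow_right
  -- basic data about s := polySubexp φ
  have hspec : polySubexp φ ∈ {e : ℕ | 0 < e ∧ ∃ α : F, α ≠ 0 ∧ φ ∣ X ^ e - C α} :=
    Nat.sInf_mem (polySubexp_set_nonempty φ hφ0 hco)
  obtain ⟨hspos, α, hα, hsdvd⟩ := hspec
  set s := polySubexp φ with hsdef
  -- p does not divide s
  have hps : ¬ p ∣ s := by
    rintro ⟨s', hss'⟩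
    obtain ⟨β, hβp⟩ := surjective_frobenius F p α
    rw [frobenius_def] at hβp
    have hβ : β ≠ 0 := fun h => hα (by rw [← hβp, h, zero_pow hp.ne_zero])
    have hfact : (X ^ s' - C β) ^ p = X ^ (p * s') - C α := by
      rw [sub_pow_char, ← pow_mul, ← map_pow, hβp, mul_comm s' p]
    have hdvd' : φ ∣ X ^ s' - C β :=
      hprime.dvd_of_dvd_pow (by rw [hfact, ← hss']; exact hsdvd)
    have hs'pos : 0 < s' := by
      rcases Nat.eq_zero_or_pos s' with h | h
      · rw [h, mul_zero] at hss'; omega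
      · exact h
    have hle : s ≤ s' := Nat.sInf_le ⟨hs'pos, β, hβ, hdvd'⟩
    have hlt : s' < p * s' := lt_mul_left hs'pos hp.one_lt
    omega
  -- t and its defining property
  set t := sInf {r : ℕ | j ≤ p ^ r} with htdef
  have hne : {r : ℕ | j ≤ p ^ r}.Nonempty := ⟨j, (Nat.lt_pow_self (n := j) hp.one_lt).le⟩
  have htmem : j ≤ p ^ t := Nat.sInf_mem hne
  -- upper bound: s * p ^ t is in the set for φ ^ j
  have hup : φ ^ j ∣ X ^ (s * p ^ t) - C (α ^ p ^ t) := by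
    have h1 : φ ^ j ∣ φ ^ (p ^ t) := pow_dvd_pow φ htmem
    have h2 : φ ^ (p ^ t) ∣ (X ^ s - C α) ^ (p ^ t) := pow_dvd_pow_of_dvd hsdvd _
    have h3 : (X ^ s - C α) ^ (p ^ t) = X ^ (s * p ^ t) - C (α ^ p ^ t) := by
      rw [sub_pow_char_pow, ← pow_mul, ← map_pow]
    exact h1.trans (h3 ▸ h2)
  have hupmem : (s * p ^ t) ∈ {e : ℕ | 0 < e ∧ ∃ α : F, α ≠ 0 ∧ φ ^ j ∣ X ^ e - C α} :=
    ⟨Nat.mul_pos hspos (pow_pos hp.pos t), α ^ p ^ t, pow_ne_zero _ hα, hup⟩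
  have hle1 : polySubexp (φ ^ j) ≤ s * p ^ t := Nat.sInf_le hupmem
  -- lower bound
  have hespec : polySubexp (φ ^ j) ∈
      {e : ℕ | 0 < e ∧ ∃ α : F, α ≠ 0 ∧ φ ^ j ∣ X ^ e - C α} :=
    Nat.sInf_mem ⟨s * p ^ t, hupmem⟩
  obtain ⟨hepos, β, hβ, hedvd⟩ := hespec
  set e := polySubexp (φ ^ j) with hedef
  have hφdvd : φ ∣ X ^ e - C β :=
    (dvd_pow_self φ (by omega : j ≠ 0)).trans hedvd
  obtain ⟨m, hm⟩ : s ∣ e := polySubexp_dvd φ hirr hXd hepos hβ hφdvd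
  have hmpos : 0 < m := by
    rcases Nat.eq_zero_or_pos m with h | h
    · rw [h, mul_zero] at hm; omega
    · exact h
  -- β = α ^ m
  have hβα : β = α ^ m := by
    have hof : Function.Injective (AdjoinRoot.of φ) := (AdjoinRoot.of φ).injective
    apply hof
    have h1 : (AdjoinRoot.root φ) ^ e = AdjoinRoot.of φ β :=
      (adjoinRoot_dvd_iff φ e β).mp hφdvd
    have h2 : (AdjoinRoot.root φ) ^ s = AdjoinRoot.of φ α :=
      (adjoinRoot_dvd_iff φ s α).mp hsdvd
    rw [← h1, hm, pow_mul, h2, ← map_pow]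
  -- decompose m = p ^ u * m'
  set u := m.factorization p with hudef
  set m' := m / p ^ u with hm'def
  have hm'eq : p ^ u * m' = m := Nat.ordProj_mul_ordCompl_eq_self m p
  have hpm' : ¬ p ∣ m' := Nat.not_dvd_ordCompl hp (by omega)
  have hm'pos : 0 < m' := by
    rcases Nat.eq_zero_or_pos m' with h | h
    · rw [h, mul_zero] at hm'eq; omega
    · exact h
  -- the squarefree polynomial ψ
  set ψ : F[X] := X ^ (s * m') - C (α ^ m') with hψdef
  have hψpow : ψ ^ (p ^ u) = X ^ (s * m) - C (α ^ m) := by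
    rw [hψdef, sub_pow_char_pow, ← pow_mul, ← map_pow, ← pow_mul, mul_assoc,
      mul_comm m' (p ^ u), hm'eq]
  have hψsf : Squarefree ψ := by
    have hsep : ψ.Separable := by
      apply Polynomial.separable_X_pow_sub_C' p (s * m') (α ^ m')
      · intro h
        rcases (hp.dvd_mul).mp h with h | h
        · exact hps h
        · exact hpm' h
      · exact pow_ne_zero _ hα
    exact hsep.squarefree
  have hjdvd : φ ^ j ∣ ψ ^ (p ^ u) := by
    rw [hψpow, ← hm, ← hβα]
    exact hedvd
  -- j ≤ p ^ u
  have hjle : j ≤ p ^ u := by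
    by_contra hlt
    push_neg at hlt
    have hφψ : φ ∣ ψ :=
      hprime.dvd_of_dvd_pow ((dvd_pow_self φ (by omega : j ≠ 0)).trans hjdvd)
    obtain ⟨c, hc⟩ := hφψ
    have hφc : ¬ φ ∣ c := by
      rintro ⟨d, rfl⟩
      exact hirr.not_isUnit (hψsf φ ⟨d, by rw [hc]; ring⟩)
    obtain ⟨d, hd⟩ := hjdvd
    have hcancel : c ^ (p ^ u) = φ ^ (j - p ^ u) * d := by
      have h1 : φ ^ (p ^ u) * c ^ (p ^ u) = φ ^ (p ^ u) * (φ ^ (j - p ^ u) * d) := by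
        rw [← mul_pow, ← hc, hd, ← mul_assoc, ← pow_add]
        congr 2
        omega
      exact mul_left_cancel₀ (pow_ne_zero _ hφ0) h1
    have hφcp : φ ∣ c ^ (p ^ u) := by
      rw [hcancel]
      exact (dvd_pow_self φ (by omega : j - p ^ u ≠ 0)).trans (dvd_mul_right _ _)
    exact hφc (hprime.dvd_of_dvd_pow hφcp)
  have hple : p ^ u ≤ m := Nat.le_of_dvd hmpos (Nat.ordProj_dvd m p)
  have htle : t ≤ u := Nat.sInf_le hjle
  have hge : s * p ^ t ≤ e := by
    calc s * p ^ t ≤ s * p ^ u := Nat.mul_le_mul_left s (Nat.pow_le_pow_right hp.pos htle)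
    _ ≤ s * m := Nat.mul_le_mul_left s hple
    _ = e := hm.symm
  omega
end

section
/- Let 𝔽_q be a finite field with q elements, let φ ∈ 𝔽_q[X] be monic irreducible of degree d with φ ≠ X, let k ≥ 1, and set m = kd. Let Q ∈ GL_m(𝔽_q) be a matrix whose characteristic polynomial and minimal polynomial are both equal to φ^k. For j = 1, …, k set f_j = subexp(φ^j). Then for every ℓ ≥ 1, the number of orbits of cardinality ℓ of the permutation τ_Q on ℙ^{m−1}(𝔽_q) equals the sum over all j with 1 ≤ j ≤ k and f_j = ℓ of (q^{jd} − q^{(j−1)d})/((q − 1)·ℓ). -/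
/-- The permutation `τ_Q` of `ℙ^{m-1}(F) = ℙ F (Fin m → F)` induced by `Q ∈ GL_m(F)`,
sending the class `[v]` to `[Q v]`. -/
noncomputable def tauQ {F : Type*} [Field F] {m : ℕ}
    (Q : Matrix.GeneralLinearGroup (Fin m) F) :
    Projectivization F (Fin m → F) → Projectivization F (Fin m → F) :=
  Projectivization.map (Matrix.mulVecLin (Q : Matrix (Fin m) (Fin m) F))
    (by
      intro x y hxy
      have h := congrArg
        (Matrix.mulVec ((Q⁻¹ : Matrix.GeneralLinearGroup (Fin m) F) :
          Matrix (Fin m) (Fin m) F)) hxy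
      have hQ : ((Q : Matrix (Fin m) (Fin m) F))⁻¹ * (Q : Matrix (Fin m) (Fin m) F) = 1 :=
        Matrix.nonsing_inv_mul _ ((Matrix.isUnit_iff_isUnit_det _).mp Q.isUnit)
      simpa [Matrix.mulVecLin_apply, Matrix.mulVec_mulVec, hQ] using h)

open Function

namespace FripAux

variable {T : Type*}

/-- forward orbit -/
def fwd (f : T → T) (v : T) : Set T := {w | ∃ n : ℕ, f^[n] v = w}

lemma mem_fwd_self (f : T → T) (v : T) : v ∈ fwd f v := ⟨0, rfl⟩

lemma iterate_mem_fwd (f : T → T) (v : T) (n : ℕ) : f^[n] v ∈ fwd f v := ⟨n, rfl⟩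

lemma fwd_subset_fwd (f : T → T) {v x : T} (hx : x ∈ fwd f v) : fwd f x ⊆ fwd f v := by
  obtain ⟨n, rfl⟩ := hx
  rintro w ⟨a, rfl⟩
  exact ⟨a + n, Function.iterate_add_apply f a n v⟩

lemma fwd_subset_of_invariant {f : T → T} {A : Set T} (hA : ∀ v ∈ A, f v ∈ A) {v : T}
    (hv : v ∈ A) : fwd f v ⊆ A := by
  rintro w ⟨a, rfl⟩
  induction a with
  | zero => exact hv
  | succ a ih => rw [Function.iterate_succ_apply']; exact hA _ ih

section Finite

variable [Finite T] {f : T → T}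

lemma exists_iterate_fixed (hf : Function.Bijective f) :
    ∃ p : ℕ, 0 < p ∧ ∀ v, f^[p] v = v := by
  let e : Equiv.Perm T := Equiv.ofBijective f hf
  refine ⟨orderOf e, orderOf_pos e, fun v => ?_⟩
  have h : (e ^ orderOf e) v = v := by rw [pow_orderOf_eq_one]; rfl
  exact h

lemma isPeriodicPt_of_bijective (hf : Function.Bijective f) (v : T) :
    ∃ p : ℕ, 0 < p ∧ IsPeriodicPt f p v := by
  obtain ⟨p, hp, hfix⟩ := exists_iterate_fixed hf
  exact ⟨p, hp, hfix v⟩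

lemma minimalPeriod_pos (hf : Function.Bijective f) (v : T) : 0 < minimalPeriod f v := by
  obtain ⟨p, hp, hper⟩ := isPeriodicPt_of_bijective hf v
  exact hper.minimalPeriod_pos hp

lemma fwd_eq_image (hf : Function.Bijective f) (v : T) :
    fwd f v = (fun n => f^[n] v) '' Set.Iio (minimalPeriod f v) := by
  ext w
  constructor
  · rintro ⟨n, rfl⟩
    exact ⟨n % minimalPeriod f v, Nat.mod_lt _ (minimalPeriod_pos hf v),
      Function.iterate_mod_minimalPeriod_eq⟩
  · rintro ⟨n, _, rfl⟩
    exact ⟨n, rfl⟩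

lemma ncard_fwd (hf : Function.Bijective f) (v : T) :
    (fwd f v).ncard = minimalPeriod f v := by
  rw [fwd_eq_image hf v,
    Set.ncard_image_of_injOn Function.iterate_injOn_Iio_minimalPeriod]
  have h : (Set.Iio (minimalPeriod f v)) = ↑(Finset.range (minimalPeriod f v)) := by
    ext; simp
  rw [h, Set.ncard_coe_finset, Finset.card_range]

lemma mem_fwd_symm (hf : Function.Bijective f) {v x : T} (hx : x ∈ fwd f v) :
    v ∈ fwd f x := by
  obtain ⟨n, rfl⟩ := hx
  obtain ⟨p, hp, hfix⟩ := exists_iterate_fixed hf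
  have hmul : ∀ c : ℕ, f^[p * c] v = v := by
    intro c
    induction c with
    | zero => rfl
    | succ c ih => rw [Nat.mul_succ, Function.iterate_add_apply, hfix, ih]
  refine ⟨p - n % p, ?_⟩
  rw [← Function.iterate_add_apply]
  have h2 : n % p + p * (n / p) = n := Nat.mod_add_div n p
  have h3 : n % p < p := Nat.mod_lt _ hp
  have h1 : p - n % p + n = p + p * (n / p) := by omega
  rw [h1, Function.iterate_add_apply, hmul, hfix]

lemma fwd_eq_of_mem (hf : Function.Bijective f) {v x : T} (hx : x ∈ fwd f v) :
    fwd f x = fwd f v :=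
  le_antisymm (fwd_subset_fwd f hx) (fwd_subset_fwd f (mem_fwd_symm hf hx))

/-- Counting orbits inside an invariant set all of whose points have period `ℓ`. -/
lemma card_orbit_sets_mul (hf : Function.Bijective f)
    (A : Set T) (hA : ∀ v ∈ A, f v ∈ A) {ℓ : ℕ}
    (hper : ∀ v ∈ A, minimalPeriod f v = ℓ) :
    Nat.card {s : Set T // (∃ v ∈ A, s = fwd f v) ∧ s.ncard = ℓ} * ℓ = Nat.card A := by
  classical
  set Sub := {s : Set T // (∃ v ∈ A, s = fwd f v) ∧ s.ncard = ℓ} with hSub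
  have hmem : ∀ (s : Sub) (x : T), x ∈ s.1 → x ∈ A := by
    intro s x hx
    obtain ⟨v, hv, hsv⟩ := s.2.1
    exact fwd_subset_of_invariant hA hv (hsv ▸ hx)
  let G : (Σ s : Sub, ↥(s.1)) → ↥A := fun p => ⟨p.2.1, hmem p.1 p.2.1 p.2.2⟩
  have hGbij : Function.Bijective G := by
    constructor
    · rintro ⟨⟨s, hs⟩, x, hx⟩ ⟨⟨s', hs'⟩, x', hx'⟩ h
      have hxx : (x : T) = x' := congrArg Subtype.val h
      have hss : s = s' := by
        obtain ⟨v, hv, hsv⟩ := hs.1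
        obtain ⟨v', hv', hsv'⟩ := hs'.1
        have h1 : s = fwd f x := by
          rw [hsv]; exact (fwd_eq_of_mem hf (hsv ▸ hx)).symm
        have h2 : s' = fwd f x' := by
          rw [hsv']; exact (fwd_eq_of_mem hf (hsv' ▸ hx')).symm
        rw [h1, h2, hxx]
      exact Sigma.subtype_ext (Subtype.ext hss) hxx
    · rintro ⟨a, ha⟩
      refine ⟨⟨⟨fwd f a, ⟨a, ha, rfl⟩, ?_⟩, ⟨a, mem_fwd_self f a⟩⟩, rfl⟩
      rw [ncard_fwd hf]
      exact hper a ha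
  have hcard : Nat.card (Σ s : Sub, ↥(s.1)) = Nat.card ↥A := Nat.card_eq_of_bijective G hGbij
  haveI : Fintype Sub := Fintype.ofFinite _
  haveI : ∀ s : Sub, Fintype ↥(s.1) := fun s => Fintype.ofFinite _
  rw [Nat.card_eq_fintype_card, Fintype.card_sigma] at hcard
  have hconst : ∀ s : Sub, Fintype.card ↥(s.1) = ℓ := by
    intro s
    rw [← Nat.card_eq_fintype_card, Nat.card_coe_set_eq]
    exact s.2.2
  rw [Finset.sum_congr rfl (fun s _ => hconst s), Finset.sum_const, smul_eq_mul,
    Finset.card_univ, ← Nat.card_eq_fintype_card] at hcard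
  exact hcard

lemma nat_card_sigma {ι : Type*} [Fintype ι] (gt : ι → Type*) [∀ i, Finite (gt i)] :
    Nat.card (Σ i, gt i) = ∑ i, Nat.card (gt i) := by
  haveI : ∀ i, Fintype (gt i) := fun i => Fintype.ofFinite _
  rw [Nat.card_eq_fintype_card, Fintype.card_sigma]
  exact Finset.sum_congr rfl fun i _ => (Nat.card_eq_fintype_card).symm

end Finite

/-- Conjugation invariance of the orbit-set count. -/
lemma card_orbit_sets_conj {S T : Type*} (g : S ≃ T) (f : S → S) (f' : T → T)
    (hcomm : ∀ x, g (f x) = f' (g x)) (ℓ : ℕ) :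
    Nat.card {s : Set S // (∃ v, s = fwd f v) ∧ s.ncard = ℓ} =
      Nat.card {s : Set T // (∃ v, s = fwd f' v) ∧ s.ncard = ℓ} := by
  have hit : ∀ (n : ℕ) (x : S), g (f^[n] x) = f'^[n] (g x) := by
    intro n
    induction n with
    | zero => intro x; rfl
    | succ n ih =>
      intro x
      rw [Function.iterate_succ_apply', Function.iterate_succ_apply', hcomm, ih]
  have himg : ∀ v : S, g '' fwd f v = fwd f' (g v) := by
    intro v
    ext w
    constructor
    · rintro ⟨x, ⟨n, rfl⟩, rfl⟩
      exact ⟨n, (hit n v).symm⟩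
    · rintro ⟨n, rfl⟩
      exact ⟨f^[n] v, ⟨n, rfl⟩, hit n v⟩
  have hit' : ∀ (n : ℕ) (x : T), g.symm (f'^[n] x) = f^[n] (g.symm x) := by
    intro n x
    apply g.injective
    rw [hit n, Equiv.apply_symm_apply, Equiv.apply_symm_apply]
  have himg' : ∀ v : T, g.symm '' fwd f' v = fwd f (g.symm v) := by
    intro v
    ext w
    constructor
    · rintro ⟨x, ⟨n, rfl⟩, rfl⟩
      exact ⟨n, (hit' n v).symm⟩
    · rintro ⟨n, rfl⟩
      exact ⟨f'^[n] v, ⟨n, rfl⟩, hit' n v⟩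
  apply Nat.card_congr
  refine ⟨fun s => ⟨g '' s.1, ?_, ?_⟩, fun s => ⟨g.symm '' s.1, ?_, ?_⟩, ?_, ?_⟩
  · obtain ⟨v, hv⟩ := s.2.1
    exact ⟨g v, by rw [hv, himg]⟩
  · rw [Set.ncard_image_of_injective _ g.injective]; exact s.2.2
  · obtain ⟨v, hv⟩ := s.2.1
    exact ⟨g.symm v, by rw [hv, himg']⟩
  · rw [Set.ncard_image_of_injective _ g.symm.injective]; exact s.2.2
  · intro s
    apply Subtype.ext
    simp
  · intro s
    apply Subtype.ext
    simp

end FripAux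

namespace FripAux

open Polynomial

variable {F : Type*} [Field F] {φ : F[X]}

lemma phi_eq_X_of_dvd (hmonic : φ.Monic) (hirr : Irreducible φ) (h : φ ∣ X) : φ = X := by
  obtain ⟨c, hc⟩ := h
  have hu : IsUnit c := (Polynomial.irreducible_X.isUnit_or_isUnit hc).resolve_left hirr.not_isUnit
  obtain ⟨r, hr, hcr⟩ := Polynomial.isUnit_iff.mp hu
  have hlc : (X : F[X]).leadingCoeff = φ.leadingCoeff * c.leadingCoeff := by
    rw [hc, leadingCoeff_mul]
  rw [leadingCoeff_X, hmonic.leadingCoeff, one_mul, ← hcr, leadingCoeff_C] at hlc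
  rw [← hcr, ← hlc, map_one, mul_one] at hc
  exact hc.symm

lemma isCoprime_phi_X (hmonic : φ.Monic) (hirr : Irreducible φ) (hX : φ ≠ X) :
    IsCoprime φ (X : F[X]) :=
  hirr.coprime_iff_not_dvd.mpr (fun h => hX (phi_eq_X_of_dvd hmonic hirr h))

lemma finite_adjoinRoot {g : F[X]} (hg : g ≠ 0) [Finite F] : Finite (AdjoinRoot g) := by
  cases nonempty_fintype F
  let pb := AdjoinRoot.powerBasis hg
  exact Finite.of_equiv _ pb.basis.equivFun.symm.toEquiv

lemma polySubexp_spec [Fintype F] (hmonic : φ.Monic) (hirr : Irreducible φ)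
    (hX : φ ≠ X) (j : ℕ) :
    (0 < polySubexp (φ ^ j) ∧
      ∃ α : F, α ≠ 0 ∧ φ ^ j ∣ X ^ (polySubexp (φ ^ j)) - C α) ∧
    ∀ e : ℕ, (0 < e ∧ ∃ α : F, α ≠ 0 ∧ φ ^ j ∣ X ^ e - C α) → polySubexp (φ ^ j) ≤ e := by
  have hg : (φ ^ j : F[X]) ≠ 0 := pow_ne_zero _ hmonic.ne_zero
  haveI : Finite (AdjoinRoot (φ ^ j)) := finite_adjoinRoot hg
  -- the image of X is a unit
  have hcp : IsCoprime (φ ^ j) (X : F[X]) := (isCoprime_phi_X hmonic hirr hX).pow_left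
  obtain ⟨a, b, hab⟩ := hcp
  have hmk : (AdjoinRoot.mk (φ ^ j) b) * (AdjoinRoot.mk (φ ^ j) X) = 1 := by
    have := congrArg (AdjoinRoot.mk (φ ^ j)) hab
    simpa [map_add, map_mul, AdjoinRoot.mk_self] using this
  have hunit : IsUnit (AdjoinRoot.mk (φ ^ j) X) := IsUnit.of_mul_eq_one _ (by
    rw [mul_comm]; exact hmk)
  obtain ⟨u, hu⟩ := hunit
  have hcard : 0 < Nat.card (AdjoinRoot (φ ^ j))ˣ := Nat.card_pos
  set e := Nat.card (AdjoinRoot (φ ^ j))ˣ with he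
  have hue : u ^ e = 1 := pow_card_eq_one'
  have hdvd : φ ^ j ∣ X ^ e - C (1 : F) := by
    rw [← AdjoinRoot.mk_eq_zero, map_sub, map_pow, ← hu, ← Units.val_pow_eq_pow_val, hue]
    simp
  have hmem : e ∈ {e : ℕ | 0 < e ∧ ∃ α : F, α ≠ 0 ∧ φ ^ j ∣ X ^ e - C α} :=
    ⟨hcard, 1, one_ne_zero, hdvd⟩
  constructor
  · exact Nat.sInf_mem ⟨e, hmem⟩
  · intro e' he'
    exact Nat.sInf_le he'

lemma ann_exponent (hmonic : φ.Monic) (hirr : Irreducible φ) {k : ℕ} (hk : 1 ≤ k)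
    {z : AdjoinRoot (φ ^ k)} (hz : z ≠ 0) :
    ∃ j, 1 ≤ j ∧ j ≤ k ∧
      ∀ ψ : F[X], (AdjoinRoot.mk (φ ^ k) ψ * z = 0 ↔ φ ^ j ∣ ψ) := by
  classical
  have hφ0 : φ ≠ 0 := hmonic.ne_zero
  obtain ⟨p, hp⟩ := AdjoinRoot.mk_surjective z
  have hpk : ¬ (φ ^ k ∣ p) := by
    intro h
    exact hz (hp ▸ (AdjoinRoot.mk_eq_zero.mpr h))
  haveI : DecidablePred fun i => φ ^ i ∣ p := fun _ => Classical.dec _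
  set i := Nat.findGreatest (fun i => φ ^ i ∣ p) k with hidef
  have hi : φ ^ i ∣ p := Nat.findGreatest_spec (P := fun i => φ ^ i ∣ p) (m := 0) (Nat.zero_le k) (show φ ^ 0 ∣ p by simpa using one_dvd p)
  have hile : i ≤ k := Nat.findGreatest_le k
  have hik : i < k := lt_of_le_of_ne hile (fun h => hpk (h ▸ hi))
  have hnd : ¬ (φ ^ (i + 1) ∣ p) :=
    Nat.findGreatest_is_greatest (Nat.lt_succ_self i) hik
  obtain ⟨u, hu⟩ := hi
  have hφu : ¬ (φ ∣ u) := by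
    intro ⟨w, hw⟩
    exact hnd ⟨w, by rw [hu, hw, pow_succ]; ring⟩
  have hcop : IsCoprime (φ ^ (k - i)) u :=
    (hirr.coprime_iff_not_dvd.mpr hφu).pow_left
  have hpow : φ ^ i * φ ^ (k - i) = φ ^ k := by
    rw [← pow_add]
    congr 1
    omega
  refine ⟨k - i, by omega, by omega, fun ψ => ?_⟩
  have h1 : AdjoinRoot.mk (φ ^ k) ψ * z = 0 ↔ φ ^ k ∣ ψ * p := by
    rw [← hp, ← map_mul, AdjoinRoot.mk_eq_zero]
  rw [h1]
  constructor
  · intro h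
    have h2 : φ ^ i * φ ^ (k - i) ∣ φ ^ i * (ψ * u) := by
      rw [hpow]
      convert h using 1
      rw [hu]; ring
    have h3 : φ ^ (k - i) ∣ ψ * u :=
      (mul_dvd_mul_iff_left (pow_ne_zero i hφ0)).mp h2
    exact hcop.dvd_of_dvd_mul_right h3
  · intro ⟨w, hw⟩
    refine ⟨w * u, ?_⟩
    rw [hw, hu, ← hpow]; ring
end FripAux

namespace FripAux2

open Polynomial

variable {F : Type*} [Field F] {φ : F[X]}

lemma exists_intertwiner (hmonic : φ.Monic) (hirr : Irreducible φ)
    {k m : ℕ} (hk : 1 ≤ k) (hm : m = k * φ.natDegree)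
    (T : (Fin m → F) →ₗ[F] (Fin m → F)) (hminT : minpoly F T = φ ^ k) :
    ∃ eL : AdjoinRoot (φ ^ k) ≃ₗ[F] (Fin m → F),
      ∀ z, T (eL z) = eL (AdjoinRoot.root (φ ^ k) * z) := by
  classical
  have hφ0 : φ ≠ 0 := hmonic.ne_zero
  have hd : 0 < φ.natDegree := hirr.natDegree_pos
  set d := φ.natDegree with hddef
  set g : F[X] := φ ^ k with hgdef
  have hg0 : g ≠ 0 := pow_ne_zero _ hφ0
  have hgmonic : g.Monic := hmonic.pow k
  have hgdeg : g.natDegree = k * d := hmonic.natDegree_pow k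
  have hkd : 0 < k * d := Nat.mul_pos hk hd
  have hTg : Polynomial.aeval T g = 0 := by rw [← hminT]; exact minpoly.aeval F T
  -- a vector not killed by φ^(k-1)
  have hne : Polynomial.aeval T (φ ^ (k - 1)) ≠ 0 := by
    intro h
    have hdvd : minpoly F T ∣ φ ^ (k - 1) := minpoly.dvd F T h
    rw [hminT, pow_dvd_pow_iff hφ0 hirr.not_isUnit] at hdvd
    omega
  obtain ⟨v₀, hv₀⟩ : ∃ v, Polynomial.aeval T (φ ^ (k - 1)) v ≠ 0 := by
    by_contra hcon
    push_neg at hcon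
    exact hne (LinearMap.ext hcon)
  set pb := AdjoinRoot.powerBasis hg0 with hpbdef
  have hdim : pb.dim = k * d := by rw [hpbdef, AdjoinRoot.powerBasis_dim, hgdeg]
  set L : AdjoinRoot g →ₗ[F] (Fin m → F) :=
    pb.basis.constr F (fun i => (T ^ (i : ℕ)) v₀) with hLdef
  have low : ∀ r : F[X], r.natDegree < k * d →
      L (AdjoinRoot.mk g r) = Polynomial.aeval T r v₀ := by
    intro r hr
    rw [Polynomial.as_sum_range' r (k * d) hr, map_sum, map_sum, map_sum,
      LinearMap.sum_apply]
    refine Finset.sum_congr rfl fun i hi => ?_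
    have hi' : i < pb.dim := by rw [hdim]; exact Finset.mem_range.mp hi
    have h1 : AdjoinRoot.mk g (Polynomial.monomial i (r.coeff i)) =
        (r.coeff i) • (pb.basis ⟨i, hi'⟩) := by
      rw [PowerBasis.coe_basis]
      simp only [AdjoinRoot.powerBasis_gen]
      rw [← Polynomial.C_mul_X_pow_eq_monomial, map_mul, map_pow, AdjoinRoot.mk_X,
        AdjoinRoot.mk_C, ← AdjoinRoot.algebraMap_eq, ← Algebra.smul_def, hpbdef,
        AdjoinRoot.powerBasis_gen]
    rw [h1, map_smul, Module.Basis.constr_basis]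
    rw [Polynomial.aeval_monomial, Module.End.mul_apply, Module.algebraMap_end_apply]
  have hg1 : g ≠ 1 := by
    intro h
    rw [h] at hgdeg
    simp at hgdeg
    omega
  have key : ∀ p : F[X], L (AdjoinRoot.mk g p) = Polynomial.aeval T p v₀ := by
    intro p
    have hmod := Polynomial.modByMonic_add_div p g
    have hdeg : (p %ₘ g).natDegree < k * d := by
      rw [← hgdeg]
      exact Polynomial.natDegree_modByMonic_lt p hgmonic hg1
    have e1 : AdjoinRoot.mk g p = AdjoinRoot.mk g (p %ₘ g) := by
      rw [AdjoinRoot.mk_eq_mk]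
      exact ⟨p /ₘ g, sub_eq_of_eq_add' hmod.symm⟩
    rw [e1, low _ hdeg]
    conv_rhs => rw [← hmod]
    rw [map_add, map_mul, hTg]
    simp
  have hLinj : Function.Injective L := by
    rw [injective_iff_map_eq_zero]
    intro z hz0
    obtain ⟨p, rfl⟩ := AdjoinRoot.mk_surjective z
    rw [key] at hz0
    by_contra hz
    have hpk : ¬ ((φ : F[X]) ^ k ∣ p) := fun h => hz (AdjoinRoot.mk_eq_zero.mpr h)
    haveI : DecidablePred fun i => φ ^ i ∣ p := fun _ => Classical.dec _
    set i := Nat.findGreatest (fun i => φ ^ i ∣ p) k with hidef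
    have hi : φ ^ i ∣ p := Nat.findGreatest_spec (P := fun i => φ ^ i ∣ p) (m := 0)
      (Nat.zero_le k) (show φ ^ 0 ∣ p by simpa using one_dvd p)
    have hile : i ≤ k := Nat.findGreatest_le k
    have hik : i < k := lt_of_le_of_ne hile (fun h => hpk (h ▸ hi))
    have hnd : ¬ (φ ^ (i + 1) ∣ p) :=
      Nat.findGreatest_is_greatest (Nat.lt_succ_self i) hik
    obtain ⟨u, hu⟩ := hi
    have hφu : ¬ (φ ∣ u) := by
      intro ⟨w, hw⟩
      exact hnd ⟨w, by rw [hu, hw, pow_succ]; ring⟩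
    have hcop : IsCoprime u ((φ : F[X]) ^ (k - i)) :=
      ((hirr.coprime_iff_not_dvd.mpr hφu).pow_left).symm
    obtain ⟨a, b, hab⟩ := hcop
    have hsplit : (φ : F[X]) ^ i = a * p + b * φ ^ k := by
      have h2 : (φ : F[X]) ^ (k - i) * φ ^ i = φ ^ k := by
        rw [← pow_add]; congr 1; omega
      calc (φ : F[X]) ^ i = (a * u + b * φ ^ (k - i)) * φ ^ i := by rw [hab, one_mul]
        _ = a * (φ ^ i * u) + b * (φ ^ (k - i) * φ ^ i) := by ring
        _ = a * p + b * φ ^ k := by rw [← hu, h2]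
    have h2 : Polynomial.aeval T (φ ^ i) v₀ = 0 := by
      rw [hsplit, map_add, map_mul, map_mul, hTg]
      simp only [LinearMap.add_apply, Module.End.mul_apply, hz0, map_zero,
        LinearMap.zero_apply, mul_zero, LinearMap.zero_apply]
      simp [hz0]
    have h3 : Polynomial.aeval T (φ ^ (k - 1)) v₀ = 0 := by
      have hsp : (φ : F[X]) ^ (k - 1) = φ ^ (k - 1 - i) * φ ^ i := by
        rw [← pow_add]; congr 1; omega
      rw [hsp, map_mul, Module.End.mul_apply, h2, map_zero]
    exact hv₀ h3
  haveI : Module.Finite F (AdjoinRoot g) := Module.Finite.of_basis pb.basis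
  have hfr : Module.finrank F (AdjoinRoot g) = Module.finrank F (Fin m → F) := by
    rw [pb.finrank, hdim, Module.finrank_pi, Fintype.card_fin, hm]
  have hLsurj : Function.Surjective L :=
    (LinearMap.injective_iff_surjective_of_finrank_eq_finrank hfr).mp hLinj
  refine ⟨LinearEquiv.ofBijective L ⟨hLinj, hLsurj⟩, ?_⟩
  intro z
  obtain ⟨p, rfl⟩ := AdjoinRoot.mk_surjective z
  show T (L (AdjoinRoot.mk g p)) = L (AdjoinRoot.root g * AdjoinRoot.mk g p)
  rw [key, ← AdjoinRoot.mk_X, ← map_mul, key, map_mul, Polynomial.aeval_X,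
    Module.End.mul_apply]

end FripAux2

lemma tauQ_mk {F : Type*} [Field F] {m : ℕ} (Q : Matrix.GeneralLinearGroup (Fin m) F)
    (v : Fin m → F) (hv : v ≠ 0)
    (hv' : Matrix.mulVecLin (Q : Matrix (Fin m) (Fin m) F) v ≠ 0) :
    tauQ Q (Projectivization.mk F v hv) = Projectivization.mk F _ hv' := rfl

set_option maxHeartbeats 1000000 in
open Polynomial in
/-- **Fripertinger.** Let `𝔽_q` be a finite field with `q` elements, let
`φ ∈ 𝔽_q[X]` be monic irreducible of degree `d` with `φ ≠ X`, let `k ≥ 1`, and `m = k d`.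
Let `Q ∈ GL_m(𝔽_q)` have characteristic polynomial and minimal polynomial both equal to
`φ^k`. For `j = 1, …, k` set `f_j = subexp(φ^j)`. Then for every `ℓ ≥ 1`, the number of
orbits of cardinality `ℓ` of the permutation `τ_Q` on `ℙ^{m−1}(𝔽_q)` (orbits of the cyclic
group generated by `τ_Q`, here described as forward orbits under iteration) equals
`∑_{1 ≤ j ≤ k, f_j = ℓ} (q^{jd} − q^{(j−1)d})/((q − 1) ℓ)`. -/
theorem card_orbits_tauQ_of_charpoly_eq_minpoly_eq_pow_irreducible
    {F : Type*} [Field F] [Fintype F]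
    (φ : Polynomial F) (hmonic : φ.Monic) (hirr : Irreducible φ)
    (hX : φ ≠ Polynomial.X)
    {k m : ℕ} (hk : 1 ≤ k) (hm : m = k * φ.natDegree)
    (Q : Matrix.GeneralLinearGroup (Fin m) F)
    (hchar : Matrix.charpoly (Q : Matrix (Fin m) (Fin m) F) = φ ^ k)
    (hmin : minpoly F (Q : Matrix (Fin m) (Fin m) F) = φ ^ k)
    (ℓ : ℕ) (hℓ : 1 ≤ ℓ) :
    Nat.card {s : Set (Projectivization F (Fin m → F)) //
        (∃ v : Projectivization F (Fin m → F),
          s = {w | ∃ n : ℕ, (tauQ Q)^[n] v = w}) ∧ s.ncard = ℓ} =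
      ∑ j ∈ (Finset.Icc 1 k).filter (fun j => polySubexp (φ ^ j) = ℓ),
        (Fintype.card F ^ (j * φ.natDegree) - Fintype.card F ^ ((j - 1) * φ.natDegree)) /
          ((Fintype.card F - 1) * ℓ) := by
  classical
  have hd : 0 < φ.natDegree := hirr.natDegree_pos
  set d := φ.natDegree with hddef
  have hφ0 : φ ≠ 0 := hmonic.ne_zero
  set q := Fintype.card F with hq
  have hq2 : 1 < q := Fintype.one_lt_card
  -- the endomorphism T
  set T : (Fin m → F) →ₗ[F] (Fin m → F) :=
    Matrix.mulVecLin (Q : Matrix (Fin m) (Fin m) F) with hT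
  have hminT : minpoly F T = φ ^ k := by
    rw [hT, ← Matrix.toLin'_apply', Matrix.minpoly_toLin', hmin]
  obtain ⟨eL, heL⟩ := FripAux2.exists_intertwiner hmonic hirr hk hm T hminT
  haveI : Finite (AdjoinRoot (φ ^ k)) := FripAux.finite_adjoinRoot (pow_ne_zero _ hφ0)
  haveI : Finite (Projectivization F (AdjoinRoot (φ ^ k))) := Quotient.finite _
  -- the root is a unit
  have hcpX : IsCoprime ((φ : F[X]) ^ k) X :=
    (FripAux.isCoprime_phi_X hmonic hirr hX).pow_left
  obtain ⟨a, b, hab⟩ := hcpX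
  have hmk1 : AdjoinRoot.mk (φ ^ k) b * AdjoinRoot.root (φ ^ k) = 1 := by
    have h := congrArg (AdjoinRoot.mk (φ ^ k)) hab
    simpa [map_add, map_mul, AdjoinRoot.mk_self, AdjoinRoot.mk_X] using h
  have hrootunit : IsUnit (AdjoinRoot.root (φ ^ k)) :=
    IsUnit.of_mul_eq_one _ (by rw [mul_comm]; exact hmk1)
  obtain ⟨w, hw⟩ := hrootunit.exists_left_inv
  have hmulne : ∀ z : AdjoinRoot (φ ^ k), z ≠ 0 → AdjoinRoot.root (φ ^ k) * z ≠ 0 := by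
    intro z hz h0
    apply hz
    have h := congrArg (w * ·) h0
    simpa [← mul_assoc, hw] using h
  have hpowne : ∀ (n : ℕ) (z : AdjoinRoot (φ ^ k)), z ≠ 0 →
      (AdjoinRoot.root (φ ^ k)) ^ n * z ≠ 0 := by
    intro n
    induction n with
    | zero => intro z hz; simpa using hz
    | succ n ih =>
      intro z hz
      have h1 : (AdjoinRoot.root (φ ^ k)) ^ (n + 1) * z
          = AdjoinRoot.root (φ ^ k) * ((AdjoinRoot.root (φ ^ k)) ^ n * z) := by ring
      rw [h1]
      exact hmulne _ (ih z hz)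
  -- the multiplication map and σ
  set μ : AdjoinRoot (φ ^ k) →ₗ[F] AdjoinRoot (φ ^ k) :=
    LinearMap.mulLeft F (AdjoinRoot.root (φ ^ k)) with hμ
  have hμinj : Function.Injective μ := by
    intro x y hxy
    have h := congrArg (w * ·) hxy
    simpa [hμ, LinearMap.mulLeft_apply, ← mul_assoc, hw] using h
  set σ : Projectivization F (AdjoinRoot (φ ^ k)) → Projectivization F (AdjoinRoot (φ ^ k)) :=
    Projectivization.map μ hμinj with hσ
  have hσinj : Function.Injective σ := Projectivization.map_injective μ hμinj
  have hσbij : Function.Bijective σ := Finite.injective_iff_bijective.mp hσinj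
  -- the equivalence of projective spaces
  have heinj : Function.Injective (eL : AdjoinRoot (φ ^ k) →ₗ[F] (Fin m → F)) := eL.injective
  have heinj' : Function.Injective (eL.symm : (Fin m → F) →ₗ[F] AdjoinRoot (φ ^ k)) :=
    eL.symm.injective
  set Gmap := Projectivization.map (eL : AdjoinRoot (φ ^ k) →ₗ[F] (Fin m → F)) heinj
    with hGmap
  set G : Projectivization F (AdjoinRoot (φ ^ k)) ≃ Projectivization F (Fin m → F) :=
    { toFun := Gmap
      invFun := Projectivization.map (eL.symm : (Fin m → F) →ₗ[F] AdjoinRoot (φ ^ k)) heinj'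
      left_inv := by
        intro P
        induction P using Projectivization.ind with
        | h v hv =>
          rw [hGmap, Projectivization.map_mk, Projectivization.map_mk,
            Projectivization.mk_eq_mk_iff']
          exact ⟨1, by simp⟩
      right_inv := by
        intro P
        induction P using Projectivization.ind with
        | h v hv =>
          rw [hGmap, Projectivization.map_mk, Projectivization.map_mk,
            Projectivization.mk_eq_mk_iff']
          exact ⟨1, by simp⟩ } with hG
  have hGapp : ∀ x, G x = Gmap x := fun _ => rfl
  have hconj : ∀ P, G (σ P) = tauQ Q (G P) := by
    intro P
    induction P using Projectivization.ind with
    | h v hv =>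
      rw [hGapp, hGapp, hσ, hGmap]
      rw [Projectivization.map_mk, Projectivization.map_mk, Projectivization.map_mk,
        tauQ_mk Q _ _ (fun h0 => hmulne v hv (eL.injective (by rw [map_zero, ← heL v]; exact h0))),
        Projectivization.mk_eq_mk_iff']
      refine ⟨1, ?_⟩
      rw [one_smul, ← hT]
      show T (eL v) = eL (μ v)
      rw [heL v]
      rfl
  -- jz and its properties
  set jz : AdjoinRoot (φ ^ k) → ℕ :=
    fun z => sInf {j | AdjoinRoot.mk (φ ^ k) (φ ^ j) * z = 0} with hjz
  have jz_spec : ∀ z : AdjoinRoot (φ ^ k), z ≠ 0 → 1 ≤ jz z ∧ jz z ≤ k ∧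
      ∀ ψ : F[X], (AdjoinRoot.mk (φ ^ k) ψ * z = 0 ↔ φ ^ (jz z) ∣ ψ) := by
    intro z hz
    obtain ⟨j, hj1, hjk, hiff⟩ := FripAux.ann_exponent hmonic hirr hk hz
    have hsets : {j' | AdjoinRoot.mk (φ ^ k) (φ ^ j') * z = 0} = Set.Ici j := by
      ext j'
      rw [Set.mem_setOf_eq, hiff (φ ^ j'), pow_dvd_pow_iff hφ0 hirr.not_isUnit, Set.mem_Ici]
    have hjzeq : jz z = j := by
      simp only [hjz]
      rw [hsets, csInf_Ici]
    rw [hjzeq]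
    exact ⟨hj1, hjk, hiff⟩
  have jz_smul : ∀ (α : F), α ≠ 0 → ∀ z : AdjoinRoot (φ ^ k), jz (α • z) = jz z := by
    intro α hα z
    have hcond : ∀ ψ : F[X],
        (AdjoinRoot.mk (φ ^ k) ψ * (α • z) = 0 ↔ AdjoinRoot.mk (φ ^ k) ψ * z = 0) := by
      intro ψ
      rw [mul_smul_comm]
      constructor
      · intro h
        have h2 := congrArg (α⁻¹ • ·) h
        simpa [smul_smul, inv_mul_cancel₀ hα] using h2
      · intro h
        rw [h, smul_zero]
    simp only [hjz]
    congr 1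
    ext j'
    simp only [Set.mem_setOf_eq, hcond]
  have jz_root : ∀ z : AdjoinRoot (φ ^ k), jz (AdjoinRoot.root (φ ^ k) * z) = jz z := by
    intro z
    have hcond : ∀ ψ : F[X],
        (AdjoinRoot.mk (φ ^ k) ψ * (AdjoinRoot.root (φ ^ k) * z) = 0 ↔
          AdjoinRoot.mk (φ ^ k) ψ * z = 0) := by
      intro ψ
      constructor
      · intro h
        have h2 := congrArg (w * ·) h
        simp only [mul_zero] at h2
        calc AdjoinRoot.mk (φ ^ k) ψ * z
            = (w * AdjoinRoot.root (φ ^ k)) * (AdjoinRoot.mk (φ ^ k) ψ * z) := by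
              rw [hw, one_mul]
          _ = w * (AdjoinRoot.mk (φ ^ k) ψ * (AdjoinRoot.root (φ ^ k) * z)) := by ring
          _ = 0 := h2
      · intro h
        calc AdjoinRoot.mk (φ ^ k) ψ * (AdjoinRoot.root (φ ^ k) * z)
            = AdjoinRoot.root (φ ^ k) * (AdjoinRoot.mk (φ ^ k) ψ * z) := by ring
          _ = 0 := by rw [h, mul_zero]
    simp only [hjz]
    congr 1
    ext j'
    simp only [Set.mem_setOf_eq, hcond]
  have jP_mk : ∀ (z : AdjoinRoot (φ ^ k)) (hz : z ≠ 0),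
      jz ((Projectivization.mk F z hz).rep) = jz z := by
    intro z hz
    obtain ⟨α, hα⟩ := Projectivization.exists_smul_eq_mk_rep F z hz
    rw [← hα, Units.smul_def, jz_smul _ (Units.ne_zero α)]
  -- action of σ on mk
  have σ_mk : ∀ (z : AdjoinRoot (φ ^ k)) (hz : z ≠ 0),
      σ (Projectivization.mk F z hz)
        = Projectivization.mk F (AdjoinRoot.root (φ ^ k) * z) (hmulne z hz) := by
    intro z hz
    rw [hσ, Projectivization.map_mk, Projectivization.mk_eq_mk_iff']
    exact ⟨1, by rw [one_smul]; rfl⟩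
  have σ_iter : ∀ (n : ℕ) (z : AdjoinRoot (φ ^ k)) (hz : z ≠ 0),
      σ^[n] (Projectivization.mk F z hz)
        = Projectivization.mk F ((AdjoinRoot.root (φ ^ k)) ^ n * z) (hpowne n z hz) := by
    intro n
    induction n with
    | zero =>
      intro z hz
      rw [Function.iterate_zero_apply, Projectivization.mk_eq_mk_iff']
      exact ⟨1, by simp⟩
    | succ n ih =>
      intro z hz
      rw [Function.iterate_succ_apply', ih z hz, σ_mk _ (hpowne n z hz),
        Projectivization.mk_eq_mk_iff']
      exact ⟨1, by rw [one_smul]; ring⟩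
  -- minimal periods
  have hper : ∀ P : Projectivization F (AdjoinRoot (φ ^ k)),
      Function.minimalPeriod σ P = polySubexp (φ ^ (jz P.rep)) := by
    intro P
    set z := P.rep with hzdef
    have hz : z ≠ 0 := P.rep_nonzero
    obtain ⟨hj1, hjk, hiff⟩ := jz_spec z hz
    have hPmk : P = Projectivization.mk F z hz := (Projectivization.mk_rep P).symm
    have hcrit : ∀ n : ℕ, σ^[n] P = P ↔ ∃ α : F, α ≠ 0 ∧ (φ ^ (jz z) ∣ X ^ n - C α) := by
      intro n
      rw [hPmk, σ_iter n z hz, Projectivization.mk_eq_mk_iff']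
      constructor
      · rintro ⟨α, hα⟩
        have hα0 : α ≠ 0 := by
          intro h0
          rw [h0, zero_smul] at hα
          exact (hpowne n z hz) hα.symm
        refine ⟨α, hα0, ?_⟩
        rw [← hiff]
        rw [map_sub, map_pow, AdjoinRoot.mk_X, AdjoinRoot.mk_C, sub_mul,
          ← AdjoinRoot.algebraMap_eq, ← Algebra.smul_def, hα, sub_self]
      · rintro ⟨α, hα0, hdvd⟩
        have h0 := (hiff _).mpr hdvd
        rw [map_sub, map_pow, AdjoinRoot.mk_X, AdjoinRoot.mk_C, sub_mul,
          ← AdjoinRoot.algebraMap_eq, ← Algebra.smul_def, sub_eq_zero] at h0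
        exact ⟨α, h0.symm⟩
    obtain ⟨⟨hpos, α, hα0, hdvd⟩, hmin'⟩ := FripAux.polySubexp_spec hmonic hirr hX (jz z)
    have hePer : Function.IsPeriodicPt σ (polySubexp (φ ^ (jz z))) P :=
      (hcrit _).mpr ⟨α, hα0, hdvd⟩
    have hle : Function.minimalPeriod σ P ≤ polySubexp (φ ^ (jz z)) :=
      hePer.minimalPeriod_le hpos
    have hge : polySubexp (φ ^ (jz z)) ≤ Function.minimalPeriod σ P := by
      have hp := Function.isPeriodicPt_minimalPeriod σ P
      have hposm : 0 < Function.minimalPeriod σ P := FripAux.minimalPeriod_pos hσbij P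
      obtain ⟨α', hα', hdvd'⟩ := (hcrit _).mp hp
      exact hmin' _ ⟨hposm, α', hα', hdvd'⟩
    omega
  -- cardinality of kernels
  have hK : ∀ j, j ≤ k →
      Nat.card {z : AdjoinRoot (φ ^ k) | AdjoinRoot.mk (φ ^ k) (φ ^ j) * z = 0}
        = q ^ (j * d) := by
    intro j hjk
    have hjkj : (φ : F[X]) ^ j * φ ^ (k - j) = φ ^ k := by
      rw [← pow_add]; congr 1; omega
    have hdj : ((φ : F[X]) ^ j).degree = ((j * d : ℕ) : WithBot ℕ) := by
      rw [Polynomial.degree_eq_natDegree (pow_ne_zero _ hφ0), hmonic.natDegree_pow]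
    set Φ : Polynomial.degreeLT F (j * d) →
        {z : AdjoinRoot (φ ^ k) | AdjoinRoot.mk (φ ^ k) (φ ^ j) * z = 0} := fun p =>
      ⟨AdjoinRoot.mk (φ ^ k) (φ ^ (k - j) * p.1), by
        rw [Set.mem_setOf_eq, ← map_mul, AdjoinRoot.mk_eq_zero, ← mul_assoc, hjkj]
        exact dvd_mul_right _ _⟩ with hΦ
    have hΦbij : Function.Bijective Φ := by
      constructor
      · intro p1 p2 h
        apply Subtype.ext
        have h' : AdjoinRoot.mk (φ ^ k) (φ ^ (k - j) * p1.1)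
            = AdjoinRoot.mk (φ ^ k) (φ ^ (k - j) * p2.1) := congrArg Subtype.val h
        rw [AdjoinRoot.mk_eq_mk] at h'
        have h2 : (φ : F[X]) ^ k ∣ φ ^ (k - j) * (p1.1 - p2.1) := by
          have he : (φ : F[X]) ^ (k - j) * (p1.1 - p2.1)
              = φ ^ (k - j) * p1.1 - φ ^ (k - j) * p2.1 := by ring
          rw [he]
          exact h'
        have h3 : (φ : F[X]) ^ j ∣ (p1.1 - p2.1) := by
          have hre : (φ : F[X]) ^ k = φ ^ (k - j) * φ ^ j := by rw [← hjkj]; ring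
          rw [hre] at h2
          exact (mul_dvd_mul_iff_left (pow_ne_zero (k - j) hφ0)).mp h2
        have hdeglt : (p1.1 - p2.1).degree < ((φ : F[X]) ^ j).degree := by
          rw [hdj]
          exact Polynomial.mem_degreeLT.mp (Submodule.sub_mem _ p1.2 p2.2)
        have h4 := Polynomial.eq_zero_of_dvd_of_degree_lt h3 hdeglt
        exact sub_eq_zero.mp h4
      · rintro ⟨z, hzmem⟩
        obtain ⟨p, rfl⟩ := AdjoinRoot.mk_surjective z
        rw [Set.mem_setOf_eq, ← map_mul, AdjoinRoot.mk_eq_zero] at hzmem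
        have h2 : (φ : F[X]) ^ j * φ ^ (k - j) ∣ φ ^ j * p := by rw [hjkj]; exact hzmem
        have h3 : (φ : F[X]) ^ (k - j) ∣ p :=
          (mul_dvd_mul_iff_left (pow_ne_zero j hφ0)).mp h2
        obtain ⟨s, rfl⟩ := h3
        have hmod := Polynomial.modByMonic_add_div s (φ ^ j)
        have hrmem : s %ₘ (φ ^ j) ∈ Polynomial.degreeLT F (j * d) := by
          rw [Polynomial.mem_degreeLT, ← hdj]
          exact Polynomial.degree_modByMonic_lt s (hmonic.pow j)
        refine ⟨⟨s %ₘ (φ ^ j), hrmem⟩, ?_⟩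
        apply Subtype.ext
        show AdjoinRoot.mk (φ ^ k) (φ ^ (k - j) * (s %ₘ (φ ^ j)))
          = AdjoinRoot.mk (φ ^ k) (φ ^ (k - j) * s)
        rw [AdjoinRoot.mk_eq_mk, ← hjkj]
        refine ⟨-(s /ₘ (φ ^ j)), ?_⟩
        linear_combination ((φ : F[X]) ^ (k - j)) * hmod
    rw [← Nat.card_eq_of_bijective Φ hΦbij,
      Nat.card_congr (Polynomial.degreeLTEquiv F (j * d)).toEquiv,
      Nat.card_eq_fintype_card, Fintype.card_fun, Fintype.card_fin, hq]
  -- cardinality of the level sets of jz, projectively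
  set Aset : ℕ → Set (Projectivization F (AdjoinRoot (φ ^ k))) :=
    fun j => {P | jz P.rep = j} with hAset
  have hPj : ∀ j, 1 ≤ j → j ≤ k →
      (q - 1) * Nat.card (Aset j) = q ^ (j * d) - q ^ ((j - 1) * d) := by
    intro j hj1 hjk
    have hsub : {z : AdjoinRoot (φ ^ k) | AdjoinRoot.mk (φ ^ k) (φ ^ (j - 1)) * z = 0}
        ⊆ {z : AdjoinRoot (φ ^ k) | AdjoinRoot.mk (φ ^ k) (φ ^ j) * z = 0} := by
      intro z hz
      rw [Set.mem_setOf_eq] at hz ⊢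
      have hsp : (φ : F[X]) ^ j = φ * φ ^ (j - 1) := by
        rw [← pow_succ']; congr 1; omega
      rw [hsp, map_mul, mul_assoc, hz, mul_zero]
    have hseteq : {z : AdjoinRoot (φ ^ k) | z ≠ 0 ∧ jz z = j} =
        {z | AdjoinRoot.mk (φ ^ k) (φ ^ j) * z = 0} \
          {z | AdjoinRoot.mk (φ ^ k) (φ ^ (j - 1)) * z = 0} := by
      ext z
      by_cases hz : z = 0
      · subst hz
        simp only [Set.mem_setOf_eq, Set.mem_diff]
        constructor
        · rintro ⟨h0, -⟩
          exact absurd rfl h0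
        · rintro ⟨-, h2⟩
          exact absurd (mul_zero _) h2
      · obtain ⟨h1, h2, hiff⟩ := jz_spec z hz
        simp only [Set.mem_setOf_eq, Set.mem_diff, hz, ne_eq, not_false_eq_true, true_and]
        rw [hiff (φ ^ j), hiff (φ ^ (j - 1)),
          pow_dvd_pow_iff hφ0 hirr.not_isUnit, pow_dvd_pow_iff hφ0 hirr.not_isUnit]
        omega
    have hcard1 : Nat.card {z : AdjoinRoot (φ ^ k) | z ≠ 0 ∧ jz z = j}
        = q ^ (j * d) - q ^ ((j - 1) * d) := by
      rw [Nat.card_coe_set_eq, hseteq,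
        Set.ncard_diff hsub (Set.toFinite _),
        ← Nat.card_coe_set_eq, ← Nat.card_coe_set_eq,
        hK j hjk, hK (j - 1) (by omega)]
    -- product structure
    set Ψ : ↥(Aset j) × Fˣ → {z : AdjoinRoot (φ ^ k) | z ≠ 0 ∧ jz z = j} := fun pu =>
      ⟨((pu.2 : F)) • pu.1.1.rep, by
        constructor
        · exact smul_ne_zero (Units.ne_zero pu.2) pu.1.1.rep_nonzero
        · rw [jz_smul _ (Units.ne_zero pu.2)]
          exact pu.1.2⟩ with hΨ
    have hΨbij : Function.Bijective Ψ := by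
      constructor
      · rintro ⟨⟨P, hP⟩, α⟩ ⟨⟨P', hP'⟩, α'⟩ h
        have h' : ((α : F)) • P.rep = ((α' : F)) • P'.rep := congrArg Subtype.val h
        have hPP : P = P' := by
          have e1 : Projectivization.mk F ((α : F) • P.rep)
              (smul_ne_zero (Units.ne_zero α) P.rep_nonzero) = P := by
            conv_rhs => rw [← Projectivization.mk_rep P]
            rw [Projectivization.mk_eq_mk_iff']
            exact ⟨(α : F), rfl⟩
          have e2 : Projectivization.mk F ((α' : F) • P'.rep)
              (smul_ne_zero (Units.ne_zero α') P'.rep_nonzero) = P' := by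
            conv_rhs => rw [← Projectivization.mk_rep P']
            rw [Projectivization.mk_eq_mk_iff']
            exact ⟨(α' : F), rfl⟩
          rw [← e1, ← e2, Projectivization.mk_eq_mk_iff']
          exact ⟨1, by rw [one_smul]; exact h'.symm⟩
        subst hPP
        have hαα : (α : F) = (α' : F) := by
          have h2 : ((α : F) - (α' : F)) • P.rep = 0 := by
            rw [sub_smul, h', sub_self]
          rcases smul_eq_zero.mp h2 with h3 | h3
          · exact sub_eq_zero.mp h3
          · exact absurd h3 P.rep_nonzero
        have h4 : α = α' := Units.ext hαα
        subst h4
        rfl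
      · rintro ⟨z, hz, hjzz⟩
        have hP : jz ((Projectivization.mk F z hz).rep) = j := by rw [jP_mk z hz]; exact hjzz
        obtain ⟨u, hu⟩ := Projectivization.exists_smul_eq_mk_rep F z hz
        refine ⟨⟨⟨Projectivization.mk F z hz, hP⟩, u⁻¹⟩, ?_⟩
        apply Subtype.ext
        show ((u⁻¹ : Fˣ) : F) • (Projectivization.mk F z hz).rep = z
        rw [← hu, Units.smul_def, smul_smul]
        simp
    have hcardprod := Nat.card_eq_of_bijective Ψ hΨbij
    have hFq : Nat.card F = q := Nat.card_eq_fintype_card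
    rw [Nat.card_prod, Nat.card_units, hFq] at hcardprod
    rw [← hcard1, ← hcardprod]
    ring
  -- invariance of Aset
  have hAinv : ∀ j, ∀ P ∈ Aset j, σ P ∈ Aset j := by
    intro j P hP
    have h1 : σ P = Projectivization.mk F (AdjoinRoot.root (φ ^ k) * P.rep)
        (hmulne _ P.rep_nonzero) := by
      conv_lhs => rw [← Projectivization.mk_rep P]
      exact σ_mk P.rep P.rep_nonzero
    show jz (σ P).rep = j
    rw [h1, jP_mk _ _, jz_root]
    exact hP
  -- the filtered index set
  set filt := (Finset.Icc 1 k).filter (fun j => polySubexp (φ ^ j) = ℓ) with hfilt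
  -- orbit counting for each j in filt
  have hOj : ∀ j ∈ filt,
      Nat.card {s : Set (Projectivization F (AdjoinRoot (φ ^ k))) //
        (∃ P ∈ Aset j, s = FripAux.fwd σ P) ∧ s.ncard = ℓ} * ℓ = Nat.card (Aset j) := by
    intro j hj
    refine FripAux.card_orbit_sets_mul hσbij (Aset j) (hAinv j) ?_
    intro P hP
    rw [hper P]
    have hPj' : jz P.rep = j := hP
    rw [hPj']
    exact (Finset.mem_filter.mp hj).2
  have hOjcard : ∀ j ∈ filt,
      Nat.card {s : Set (Projectivization F (AdjoinRoot (φ ^ k))) //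
        (∃ P ∈ Aset j, s = FripAux.fwd σ P) ∧ s.ncard = ℓ}
        = (q ^ (j * d) - q ^ ((j - 1) * d)) / ((q - 1) * ℓ) := by
    intro j hj
    obtain ⟨hjIcc, hjf⟩ := Finset.mem_filter.mp hj
    obtain ⟨hj1, hjk⟩ := Finset.mem_Icc.mp hjIcc
    have h1 := hOj j hj
    have h2 := hPj j hj1 hjk
    have h3 : q ^ (j * d) - q ^ ((j - 1) * d) = ((q - 1) * ℓ) *
        Nat.card {s : Set (Projectivization F (AdjoinRoot (φ ^ k))) //
          (∃ P ∈ Aset j, s = FripAux.fwd σ P) ∧ s.ncard = ℓ} := by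
      rw [← h2, ← h1]
      ring
    rw [h3, Nat.mul_div_cancel_left _ (Nat.mul_pos (by omega : 0 < q - 1) hℓ)]
  -- global decomposition
  set OSall := {s : Set (Projectivization F (AdjoinRoot (φ ^ k))) //
    (∃ P, s = FripAux.fwd σ P) ∧ s.ncard = ℓ} with hOSall
  set OS : ℕ → Type _ := fun j => {s : Set (Projectivization F (AdjoinRoot (φ ^ k))) //
    (∃ P ∈ Aset j, s = FripAux.fwd σ P) ∧ s.ncard = ℓ} with hOS
  have horbj : ∀ (P P' : Projectivization F (AdjoinRoot (φ ^ k))),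
      P' ∈ FripAux.fwd σ P → jz P'.rep = jz P.rep := by
    intro P P' hmem
    exact FripAux.fwd_subset_of_invariant (hAinv (jz P.rep)) rfl hmem
  set H : (Σ j : ↥filt, OS (j : ℕ)) → OSall := fun p =>
    ⟨p.2.1, ⟨by obtain ⟨P, _, hsP⟩ := p.2.2.1; exact ⟨P, hsP⟩, p.2.2.2⟩⟩ with hH
  have hHbij : Function.Bijective H := by
    constructor
    · rintro ⟨⟨j, hj⟩, s, hs⟩ ⟨⟨j', hj'⟩, s', hs'⟩ h
      have hss : s = s' := congrArg Subtype.val h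
      have hjj : j = j' := by
        obtain ⟨⟨P, hPA, hsP⟩, -⟩ := hs
        obtain ⟨⟨P', hPA', hsP'⟩, -⟩ := hs'
        have hmem : P' ∈ FripAux.fwd σ P := by
          rw [← hsP, hss, hsP']
          exact FripAux.mem_fwd_self σ P'
        have hPAn : jz P.rep = j := hPA
        have hPAn' : jz P'.rep = j' := hPA'
        rw [← hPAn', ← hPAn]
        exact (horbj P P' hmem).symm
      exact Sigma.subtype_ext (Subtype.ext hjj) hss
    · rintro ⟨s, ⟨P, hsP⟩, hncard⟩
      have hz : P.rep ≠ 0 := P.rep_nonzero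
      obtain ⟨hj1, hjk, -⟩ := jz_spec P.rep hz
      have hperP : Function.minimalPeriod σ P = ℓ := by
        rw [← FripAux.ncard_fwd hσbij P, ← hsP]
        exact hncard
      have hjf : polySubexp (φ ^ (jz P.rep)) = ℓ := by rw [← hper P]; exact hperP
      have hjfilt : jz P.rep ∈ filt := by
        rw [hfilt, Finset.mem_filter, Finset.mem_Icc]
        exact ⟨⟨hj1, hjk⟩, hjf⟩
      exact ⟨⟨⟨jz P.rep, hjfilt⟩, ⟨s, ⟨P, rfl, hsP⟩, hncard⟩⟩, rfl⟩
  have hcardall : Nat.card OSall = ∑ j ∈ filt, Nat.card (OS j) := by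
    rw [← Nat.card_eq_of_bijective H hHbij, FripAux.nat_card_sigma]
    exact Finset.sum_coe_sort filt (fun j => Nat.card (OS j))
  -- transport to the original projective space
  have htrans := FripAux.card_orbit_sets_conj G σ (tauQ Q) hconj ℓ
  calc Nat.card {s : Set (Projectivization F (Fin m → F)) //
        (∃ v : Projectivization F (Fin m → F),
          s = {w | ∃ n : ℕ, (tauQ Q)^[n] v = w}) ∧ s.ncard = ℓ}
      = Nat.card OSall := htrans.symm
    _ = ∑ j ∈ filt, Nat.card (OS j) := hcardall
    _ = ∑ j ∈ filt, (q ^ (j * d) - q ^ ((j - 1) * d)) / ((q - 1) * ℓ) :=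
        Finset.sum_congr rfl (fun j hj => hOjcard j hj)
end
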